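/- arXiv:2308.13757 — 3 statements merged into one kernel-verified Lean document; each statement's English description precedes it below -/
import Mathlib

section
/- Let f(z) = Σ_{n≥0} a_n z^n be analytic on the unit disk with |f(z)| ≤ 1 on the disk. Then for all z with |z| = r ≤ 1/3, one has |f(z)|² + Σ_{n≥1} |a_n| r^n + (1/(1+|a_0|) + r/(1-r)) Σ_{n≥1} |a_n|² r^{2n} ≤ 1. -/
open Metric Set Complex Filter

namespace BRaux

noncomputable def ser (b : ℕ → ℂ) : FormalMultilinearSeries ℂ ℂ ℂ :=
  FormalMultilinearSeries.ofScalars ℂ b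

theorem ser_norm (b : ℕ → ℂ) (n : ℕ) : ‖ser b n‖ = ‖b n‖ :=
  FormalMultilinearSeries.ofScalars_norm ℂ b n

theorem ser_coeff (b : ℕ → ℂ) (n : ℕ) : (ser b).coeff n = b n := by
  show (ser b) n (fun _ => 1) = b n
  rw [ser, FormalMultilinearSeries.ofScalars_apply_eq]
  simp

theorem hasFPS {b : ℕ → ℂ} {g : ℂ → ℂ}
    (hs : ∀ w ∈ ball (0:ℂ) 1, HasSum (fun n => b n * w ^ n) (g w)) :
    HasFPowerSeriesOnBall g (ser b) 0 1 := by
  refine ⟨?_, one_pos, ?_⟩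
  · apply ENNReal.le_of_forall_nnreal_lt
    intro r hr
    apply FormalMultilinearSeries.le_radius_of_summable
    have hrlt : (r:ℝ) < 1 := by exact_mod_cast hr
    have hmem : ((r:ℝ):ℂ) ∈ ball (0:ℂ) 1 := by
      rw [mem_ball_zero_iff, Complex.norm_real, Real.norm_eq_abs, NNReal.abs_eq]
      exact hrlt
    have hsum := (hs _ hmem).summable
    have hsum2 : Summable fun n => ‖b n * ((r:ℝ):ℂ) ^ n‖ := summable_norm_iff.mpr hsum
    apply hsum2.congr
    intro n
    simp only [norm_mul, norm_pow, ser_norm]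
    rw [Complex.norm_real, Real.norm_eq_abs, NNReal.abs_eq]
  · intro y hy
    rw [EMetric.mem_ball, edist_zero_right] at hy
    have hy' : y ∈ ball (0:ℂ) 1 := by
      rw [mem_ball_zero_iff]
      exact_mod_cast (show (‖y‖₊ : ENNReal) < 1 from hy)
    have e : (fun n => ser b n fun _ => y) = fun n => b n * y ^ n := by
      funext n
      rw [ser, FormalMultilinearSeries.ofScalars_apply_eq, smul_eq_mul]
    rw [zero_add, e]
    exact hs y hy'

theorem ball_subset_emetric : ball (0:ℂ) 1 ⊆ Metric.eball (0:ℂ) 1 := by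
  intro x hx
  rw [mem_ball_zero_iff] at hx
  rw [← ENNReal.coe_one, Metric.eball_coe, NNReal.coe_one]
  exact mem_ball_zero_iff.mpr hx

theorem diffOn {b : ℕ → ℂ} {g : ℂ → ℂ}
    (hs : ∀ w ∈ ball (0:ℂ) 1, HasSum (fun n => b n * w ^ n) (g w)) :
    DifferentiableOn ℂ g (ball (0:ℂ) 1) :=
  (hasFPS hs).differentiableOn.mono ball_subset_emetric

theorem g_zero {b : ℕ → ℂ} {g : ℂ → ℂ}
    (hs : ∀ w ∈ ball (0:ℂ) 1, HasSum (fun n => b n * w ^ n) (g w)) :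
    g 0 = b 0 := by
  have h0 : (0:ℂ) ∈ ball (0:ℂ) 1 := by simp
  have h1 : HasSum (fun n => b n * (0:ℂ) ^ n) (b 0) := by
    have := hasSum_single (f := fun n => b n * (0:ℂ) ^ n) 0
      (fun m hm => by simp [zero_pow hm])
    simpa using this
  exact (hs 0 h0).unique h1

theorem deriv_zero {b : ℕ → ℂ} {g : ℂ → ℂ}
    (hs : ∀ w ∈ ball (0:ℂ) 1, HasSum (fun n => b n * w ^ n) (g w)) :
    deriv g 0 = b 1 := by
  rw [(hasFPS hs).hasFPowerSeriesAt.deriv]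
  exact ser_coeff b 1

theorem coeff_le_one {b : ℕ → ℂ} {g : ℂ → ℂ}
    (hs : ∀ w ∈ ball (0:ℂ) 1, HasSum (fun n => b n * w ^ n) (g w))
    (hbd : ∀ w ∈ ball (0:ℂ) 1, ‖g w‖ ≤ 1) (n : ℕ) :
    ‖b n‖ ≤ 1 := by
  have key : ∀ ρ : ℝ, ρ ∈ Set.Ioo (0:ℝ) 1 → ‖b n‖ * ρ ^ n ≤ 1 := by
    intro ρ hρ
    obtain ⟨hρ0, hρ1⟩ := hρ
    set ρ' : NNReal := ⟨ρ, hρ0.le⟩ with hρ'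
    have hsub : closedBall (0:ℂ) ρ ⊆ ball (0:ℂ) 1 := by
      apply closedBall_subset_ball
      exact hρ1
    have hd : DifferentiableOn ℂ g (closedBall (0:ℂ) ρ') := (diffOn hs).mono hsub
    have hc := hd.hasFPowerSeriesOnBall (by exact_mod_cast hρ0)
    have heq : ser b = cauchyPowerSeries g 0 ρ' :=
      (hasFPS hs).hasFPowerSeriesAt.eq_formalMultilinearSeries hc.hasFPowerSeriesAt
    have hbound := norm_cauchyPowerSeries_le g 0 ρ' n
    have hint : (∫ θ : ℝ in (0)..2 * Real.pi, ‖g (circleMap 0 ρ' θ)‖) ≤ 2 * Real.pi := by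
      have hcont : Continuous fun θ : ℝ => ‖g (circleMap 0 ρ' θ)‖ := by
        apply Continuous.norm
        apply ContinuousOn.comp_continuous (diffOn hs).continuousOn
          (continuous_circleMap 0 ρ')
        intro θ
        exact hsub (circleMap_mem_closedBall 0 hρ0.le θ)
      calc (∫ θ : ℝ in (0)..2 * Real.pi, ‖g (circleMap 0 ρ' θ)‖)
          ≤ ∫ _ : ℝ in (0)..2 * Real.pi, (1:ℝ) := by
            apply intervalIntegral.integral_mono_on Real.two_pi_pos.le
              (hcont.intervalIntegrable _ _) (intervalIntegrable_const)
            intro θ _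
            exact hbd _ (hsub (circleMap_mem_closedBall 0 hρ0.le θ))
        _ = 2 * Real.pi := by simp
    have h1 : ‖ser b n‖ ≤ (2 * Real.pi)⁻¹ * (2 * Real.pi) * |(ρ':ℝ)|⁻¹ ^ n := by
      rw [heq]
      refine hbound.trans ?_
      apply mul_le_mul_of_nonneg_right _ (by positivity)
      apply mul_le_mul_of_nonneg_left hint (by positivity)
    rw [inv_mul_cancel₀ (by positivity : (2*Real.pi) ≠ 0), one_mul, ser_norm] at h1
    rw [NNReal.abs_eq] at h1
    calc ‖b n‖ * ρ ^ n ≤ (ρ⁻¹ ^ n) * ρ ^ n := by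
          apply mul_le_mul_of_nonneg_right h1 (by positivity)
      _ = 1 := by
          rw [← mul_pow, inv_mul_cancel₀ (ne_of_gt hρ0), one_pow]
  have htend : Tendsto (fun ρ : ℝ => ‖b n‖ * ρ ^ n) (nhdsWithin 1 (Set.Ioo 0 1))
      (nhds (‖b n‖ * 1 ^ n)) :=
    ((continuous_const.mul (continuous_pow n)).tendsto 1).mono_left nhdsWithin_le_nhds
  have hne : (nhdsWithin (1:ℝ) (Set.Ioo 0 1)).NeBot := right_nhdsWithin_Ioo_neBot one_pos
  have := le_of_tendsto htend (eventually_nhdsWithin_of_forall key)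
  simpa using this

theorem normSq_mobius (c u : ℂ) :
    Complex.normSq (1 - (starRingEnd ℂ) c * u) - Complex.normSq (c - u)
      = (1 - Complex.normSq c) * (1 - Complex.normSq u) := by
  simp only [Complex.normSq_apply, Complex.sub_re, Complex.sub_im, Complex.mul_re,
    Complex.mul_im, Complex.conj_re, Complex.conj_im, Complex.one_re, Complex.one_im]
  ring

theorem mob_den_ne {c u : ℂ} (hc : ‖c‖ < 1) (hu : ‖u‖ < 1) :
    1 - (starRingEnd ℂ) c * u ≠ 0 := by
  intro h
  have h1 : (1:ℂ) = (starRingEnd ℂ) c * u := by linear_combination h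
  have h2 := congrArg (‖·‖) h1
  rw [norm_mul, norm_one, Complex.norm_conj] at h2
  nlinarith [norm_nonneg c, norm_nonneg u]

theorem mob_abs_lt {c u : ℂ} (hc : ‖c‖ < 1) (hu : ‖u‖ < 1) :
    ‖c - u‖ < ‖1 - (starRingEnd ℂ) c * u‖ := by
  have key := normSq_mobius c u
  have h1 : Complex.normSq (c - u) < Complex.normSq (1 - (starRingEnd ℂ) c * u) := by
    have hc2 : Complex.normSq c < 1 := by
      nlinarith [Complex.sq_norm c, norm_nonneg c]
    have hu2 : Complex.normSq u < 1 := by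
      nlinarith [Complex.sq_norm u, norm_nonneg u]
    have := mul_pos (sub_pos.mpr hc2) (sub_pos.mpr hu2)
    linarith
  rw [Complex.norm_def, Complex.norm_def]
  exact Real.sqrt_lt_sqrt (Complex.normSq_nonneg _) h1

theorem sp_cases {b : ℕ → ℂ} {g : ℂ → ℂ}
    (hs : ∀ w ∈ ball (0:ℂ) 1, HasSum (fun n => b n * w ^ n) (g w))
    (hbd : ∀ w ∈ ball (0:ℂ) 1, ‖g w‖ ≤ 1) :
    (∀ w ∈ ball (0:ℂ) 1, g w = b 0) ∨ (∀ w ∈ ball (0:ℂ) 1, ‖g w‖ < 1) := by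
  by_cases hex : ∃ w ∈ ball (0:ℂ) 1, 1 ≤ ‖g w‖
  · left
    obtain ⟨w₀, hw₀, hw₀1⟩ := hex
    have hmax : IsMaxOn (norm ∘ g) (ball (0:ℂ) 1) w₀ := by
      intro w hw
      simp only [Function.comp_apply, Set.mem_setOf_eq]
      exact le_trans (hbd w hw) hw₀1
    have heq := Complex.eqOn_of_isPreconnected_of_isMaxOn_norm
      (convex_ball (0:ℂ) 1).isPreconnected isOpen_ball (diffOn hs) hw₀ hmax
    intro w hw
    have h1 : g w = g w₀ := heq hw
    have h2 : g 0 = g w₀ := heq (by simp)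
    rw [h1, ← h2, g_zero hs]
  · right
    push_neg at hex
    exact hex

theorem sp_deriv {b : ℕ → ℂ} {g : ℂ → ℂ}
    (hs : ∀ w ∈ ball (0:ℂ) 1, HasSum (fun n => b n * w ^ n) (g w))
    (hbd : ∀ w ∈ ball (0:ℂ) 1, ‖g w‖ ≤ 1) :
    ‖b 1‖ ≤ 1 - ‖b 0‖ ^ 2 := by
  have hb0 : ‖b 0‖ ≤ 1 := coeff_le_one hs hbd 0
  have h0mem : (0:ℂ) ∈ ball (0:ℂ) 1 := by simp
  rcases sp_cases hs hbd with hconst | hstrict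
  · have hd0 : deriv g 0 = 0 := by
      have hev : g =ᶠ[nhds (0:ℂ)] (fun _ => b 0) := by
        filter_upwards [isOpen_ball.mem_nhds h0mem] with w hw
        exact hconst w hw
      rw [hev.deriv_eq]
      simp
    rw [← deriv_zero hs, hd0, norm_zero]
    nlinarith [norm_nonneg (b 0)]
  · have hb0' : ‖b 0‖ < 1 := by
      have := hstrict 0 h0mem
      rwa [g_zero hs] at this
    set c := b 0 with hc
    set d := (starRingEnd ℂ) c with hdd
    set φ : ℂ → ℂ := fun w => (c - g w) / (1 - d * g w) with hφ
    have hgc : ∀ w ∈ ball (0:ℂ) 1, ‖g w‖ < 1 := hstrict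
    have hden : ∀ w ∈ ball (0:ℂ) 1, 1 - d * g w ≠ 0 := fun w hw =>
      mob_den_ne hb0' (hgc w hw)
    have hφd : DifferentiableOn ℂ φ (ball (0:ℂ) 1) := by
      apply DifferentiableOn.div
      · exact (differentiableOn_const c).sub (diffOn hs)
      · exact (differentiableOn_const 1).sub ((differentiableOn_const d).mul (diffOn hs))
      · exact hden
    have hφ0 : φ 0 = 0 := by
      rw [hφ]
      simp [g_zero hs, hc]
    have hmaps : MapsTo φ (ball (0:ℂ) 1) (ball (φ 0) 1) := by
      rw [hφ0]
      intro w hw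
      rw [mem_ball_zero_iff, hφ]
      simp only [norm_div]
      rw [div_lt_one (by
        rw [norm_pos_iff]
        exact hden w hw)]
      exact mob_abs_lt hb0' (hgc w hw)
    have hschwarz := Complex.norm_deriv_le_div_of_mapsTo_ball hφd (hmaps.mono_right ball_subset_closedBall) one_pos
    have hg0 : DifferentiableAt ℂ g 0 := (diffOn hs).differentiableAt (isOpen_ball.mem_nhds h0mem)
    have hnum : DifferentiableAt ℂ (fun w => c - g w) 0 := (differentiableAt_const c).sub hg0
    have hdenom : DifferentiableAt ℂ (fun w => 1 - d * g w) 0 :=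
      (differentiableAt_const 1).sub ((differentiableAt_const d).mul hg0)
    have hdenom0 : (fun w => 1 - d * g w) 0 ≠ 0 := hden 0 h0mem
    have hderiv : deriv φ 0 = -(deriv g 0) / (1 - d * c) := by
      rw [hφ]
      rw [deriv_fun_div hnum hdenom hdenom0]
      rw [deriv_const_sub, deriv_const_sub, deriv_const_mul _ hg0]
      rw [g_zero hs, ← hc]
      have hne : (1:ℂ) - d * c ≠ 0 := by
        have := hden 0 h0mem
        rwa [g_zero hs, ← hc] at this
      field_simp
      ring
    have hdc : (1 : ℂ) - d * c = ((1 - Complex.normSq c : ℝ) : ℂ) := by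
      rw [hdd]
      push_cast
      rw [← Complex.mul_conj]
      ring
    have habs : ‖deriv φ 0‖ = ‖deriv g 0‖ / (1 - Complex.normSq c) := by
      rw [hderiv, norm_div, norm_neg, hdc, Complex.norm_real, Real.norm_eq_abs,
        _root_.abs_of_nonneg (by nlinarith [Complex.sq_norm c, norm_nonneg c] :
          (0:ℝ) ≤ 1 - Complex.normSq c)]
    rw [habs] at hschwarz
    have hpos : (0:ℝ) < 1 - Complex.normSq c := by
      nlinarith [Complex.sq_norm c, norm_nonneg c]
    rw [div_le_div_iff₀ hpos one_pos] at hschwarz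
    rw [← deriv_zero hs]
    calc ‖deriv g 0‖ ≤ 1 - Complex.normSq c := by linarith
      _ = 1 - ‖b 0‖ ^ 2 := by rw [← hc, Complex.sq_norm]

set_option maxHeartbeats 1000000 in
theorem sp_value {b : ℕ → ℂ} {g : ℂ → ℂ}
    (hs : ∀ w ∈ ball (0:ℂ) 1, HasSum (fun n => b n * w ^ n) (g w))
    (hbd : ∀ w ∈ ball (0:ℂ) 1, ‖g w‖ ≤ 1)
    (w : ℂ) (hw : w ∈ ball (0:ℂ) 1) :
    ‖g w‖ ≤ (‖b 0‖ + ‖w‖)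
      / (1 + ‖b 0‖ * ‖w‖) := by
  have hb0 : ‖b 0‖ ≤ 1 := coeff_le_one hs hbd 0
  have h0mem : (0:ℂ) ∈ ball (0:ℂ) 1 := by simp
  set A := ‖b 0‖ with hA
  set ρ := ‖w‖ with hρ
  have hA0 : 0 ≤ A := norm_nonneg _
  have hρ0 : 0 ≤ ρ := norm_nonneg _
  have hρ1 : ρ < 1 := by rwa [mem_ball_zero_iff] at hw
  have hdenpos : (0:ℝ) < 1 + A * ρ := by nlinarith
  rcases sp_cases hs hbd with hconst | hstrict
  · rw [hconst w hw, ← hA]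
    rw [le_div_iff₀ hdenpos]
    nlinarith [mul_nonneg (mul_nonneg hA0 hρ0) (sub_nonneg.mpr hb0),
      mul_nonneg hρ0 (sub_nonneg.mpr hb0)]
  · have hb0' : A < 1 := by
      have := hstrict 0 h0mem
      rwa [g_zero hs] at this
    set c := b 0 with hc
    set d := (starRingEnd ℂ) c with hdd
    set φ : ℂ → ℂ := fun v => (c - g v) / (1 - d * g v) with hφ
    have hden : ∀ v ∈ ball (0:ℂ) 1, 1 - d * g v ≠ 0 := fun v hv =>
      mob_den_ne hb0' (hstrict v hv)
    have hφd : DifferentiableOn ℂ φ (ball (0:ℂ) 1) := by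
      apply DifferentiableOn.div
      · exact (differentiableOn_const c).sub (diffOn hs)
      · exact (differentiableOn_const 1).sub ((differentiableOn_const d).mul (diffOn hs))
      · exact hden
    have hφ0 : φ 0 = 0 := by
      rw [hφ]
      simp [g_zero hs, hc]
    have hmaps : MapsTo φ (ball (0:ℂ) 1) (ball (0:ℂ) 1) := by
      intro v hv
      rw [mem_ball_zero_iff, hφ]
      simp only [norm_div]
      rw [div_lt_one (by
        rw [norm_pos_iff]
        exact hden v hv)]
      exact mob_abs_lt hb0' (hstrict v hv)
    have hschwarz : ‖φ w‖ ≤ ρ :=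
      Complex.norm_le_norm_of_mapsTo_ball hφd (hmaps.mono_right ball_subset_closedBall) hφ0 hρ1
    set u := φ w with hu
    have huball : u ∈ ball (0:ℂ) 1 := hmaps hw
    have hult : ‖u‖ < 1 := by
      rwa [mem_ball_zero_iff] at huball
    have hden2 : 1 - d * u ≠ 0 := mob_den_ne hb0' hult
    have hginv : g w = (c - u) / (1 - d * u) := by
      have h1 : φ w * (1 - d * g w) = c - g w := by
        rw [hφ]
        exact div_mul_cancel₀ _ (hden w hw)
      rw [eq_div_iff hden2]
      linear_combination h1
    set s := ‖u‖ with hss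
    have hs0 : 0 ≤ s := norm_nonneg _
    set t := ((starRingEnd ℂ) c * u).re with ht
    have habst : |t| ≤ A * s := by
      calc |t| ≤ ‖(starRingEnd ℂ) c * u‖ := Complex.abs_re_le_norm _
        _ = A * s := by rw [norm_mul, Complex.norm_conj]
    have hre : (c * (starRingEnd ℂ) u).re = t := by
      rw [ht, show (starRingEnd ℂ) c * u = (starRingEnd ℂ) (c * (starRingEnd ℂ) u) by
        rw [map_mul, Complex.conj_conj], Complex.conj_re]
    have e1 : Complex.normSq (c - u) = A ^ 2 - 2 * t + s ^ 2 := by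
      rw [Complex.normSq_sub, hre, ← Complex.sq_norm c, ← Complex.sq_norm u, ← hA, ← hss]
      ring
    have e2 : Complex.normSq (1 - d * u) = 1 - 2 * t + A ^ 2 * s ^ 2 := by
      rw [Complex.normSq_sub, Complex.normSq_one, Complex.normSq_mul, one_mul, hdd,
        Complex.normSq_conj, ← Complex.sq_norm c, ← Complex.sq_norm u, ← hA, ← hss]
      rw [Complex.conj_re, ← ht]
      ring
    have hsρ : s ≤ ρ := hschwarz
    have hA2 : (0:ℝ) ≤ 1 - A ^ 2 := by nlinarith
    have h1 : (0:ℝ) ≤ (ρ - s) * (1 - A ^ 2) * ((A + ρ) * (1 + A * s) + (A + s) * (1 + A * ρ)) := by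
      apply mul_nonneg (mul_nonneg (by linarith) hA2)
      nlinarith
    have h2 : (0:ℝ) ≤ (t + A * s) * ((1 - A ^ 2) * (1 - ρ ^ 2)) := by
      apply mul_nonneg
      · have := (abs_le.mp habst).1
        linarith
      · exact mul_nonneg hA2 (by nlinarith)
    have hkey : Complex.normSq (c - u) * (1 + A * ρ) ^ 2
        ≤ (A + ρ) ^ 2 * Complex.normSq (1 - d * u) := by
      rw [e1, e2]
      nlinarith [h1, h2]
    have hY : 0 < ‖1 - d * u‖ := by
      rw [norm_pos_iff]
      exact hden2
    have hsq : (‖c - u‖ * (1 + A * ρ)) ^ 2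
        ≤ ((A + ρ) * ‖1 - d * u‖) ^ 2 := by
      rw [mul_pow, mul_pow, Complex.sq_norm, Complex.sq_norm]
      linarith [hkey]
    have hlin : ‖c - u‖ * (1 + A * ρ) ≤ (A + ρ) * ‖1 - d * u‖ := by
      have h0l : (0:ℝ) ≤ ‖c - u‖ * (1 + A * ρ) :=
        mul_nonneg (norm_nonneg _) hdenpos.le
      have h0r : (0:ℝ) ≤ (A + ρ) * ‖1 - d * u‖ :=
        mul_nonneg (by linarith) (norm_nonneg _)
      have hsqrt := Real.sqrt_le_sqrt hsq
      rwa [Real.sqrt_sq h0l, Real.sqrt_sq h0r] at hsqrt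
    rw [hginv, norm_div, div_le_div_iff₀ hY hdenpos]
    linarith

set_option maxHeartbeats 1000000 in
theorem wiener {b : ℕ → ℂ} {g : ℂ → ℂ}
    (hs : ∀ w ∈ ball (0:ℂ) 1, HasSum (fun n => b n * w ^ n) (g w))
    (hbd : ∀ w ∈ ball (0:ℂ) 1, ‖g w‖ ≤ 1)
    (n : ℕ) (hn : 1 ≤ n) :
    ‖b n‖ ≤ 1 - ‖b 0‖ ^ 2 := by
  have hn0 : n ≠ 0 := by omega
  have hnC : (n:ℂ) ≠ 0 := Nat.cast_ne_zero.mpr hn0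
  have hcle := coeff_le_one hs hbd
  set B : ℕ → ℂ := fun k => b (n * k) with hB
  have hsum : ∀ w ∈ ball (0:ℂ) 1, Summable (fun k => B k * w ^ k) := by
    intro w hw
    rw [mem_ball_zero_iff] at hw
    apply Summable.of_norm
    apply Summable.of_nonneg_of_le (fun k => norm_nonneg _) (fun k => ?_)
      (summable_geometric_of_lt_one (norm_nonneg w) hw)
    rw [norm_mul, norm_pow]
    calc ‖B k‖ * ‖w‖ ^ k
        ≤ 1 * ‖w‖ ^ k := by
          apply mul_le_mul_of_nonneg_right (hcle _) (by positivity)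
      _ = ‖w‖ ^ k := one_mul _
  set H : ℂ → ℂ := fun w => ∑' k, B k * w ^ k with hH
  have hsH : ∀ w ∈ ball (0:ℂ) 1, HasSum (fun k => B k * w ^ k) (H w) :=
    fun w hw => (hsum w hw).hasSum
  have hζ := Complex.isPrimitiveRoot_exp n hn0
  set ζ := Complex.exp (2 * Real.pi * Complex.I / n) with hζdef
  have hζn : ζ ^ n = 1 := hζ.pow_eq_one
  have habsζ : ‖ζ‖ = 1 := by
    have he : ζ = Complex.exp (((2 * Real.pi / n : ℝ) : ℂ) * Complex.I) := by
      rw [hζdef]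
      congr 1
      push_cast
      ring
    rw [he, Complex.norm_exp_ofReal_mul_I]
  have hH1 : ∀ w ∈ ball (0:ℂ) 1, ‖H w‖ ≤ 1 := by
    intro w hw
    have hwa : ‖w‖ < 1 := by
      rwa [mem_ball_zero_iff] at hw
    by_cases hw0 : w = 0
    · subst hw0
      have h1 : HasSum (fun k => B k * (0:ℂ) ^ k) (B 0) := by
        have := hasSum_single (f := fun k => B k * (0:ℂ) ^ k) 0
          (fun m hm => by simp [zero_pow hm])
        simpa using this
      have : H 0 = B 0 := (hsH 0 (by simp)).unique h1
      rw [this, hB]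
      simpa using hcle 0
    · set z := Complex.exp (Complex.log w / n) with hz
      have hzn : z ^ n = w := by
        rw [hz, ← Complex.exp_nat_mul, mul_div_cancel₀ _ hnC, Complex.exp_log hw0]
      have hza : ‖z‖ < 1 := by
        by_contra h
        push_neg at h
        have h1 : (1:ℝ) ≤ ‖z‖ ^ n := one_le_pow₀ h
        rw [← norm_pow, hzn] at h1
        linarith
      have hmemj : ∀ j : ℕ, ζ ^ j * z ∈ ball (0:ℂ) 1 := by
        intro j
        rw [mem_ball_zero_iff, norm_mul, norm_pow, habsζ, one_pow, one_mul]
        exact hza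
      have htot : HasSum (fun m => ∑ j ∈ Finset.range n, b m * (ζ ^ j * z) ^ m)
          (∑ j ∈ Finset.range n, g (ζ ^ j * z)) :=
        hasSum_sum (fun j _ => hs _ (hmemj j))
      have hinner : (fun m => ∑ j ∈ Finset.range n, b m * (ζ ^ j * z) ^ m)
          = fun m => if n ∣ m then (n:ℂ) * (b m * z ^ m) else 0 := by
        funext m
        have hterm : ∀ j, b m * (ζ ^ j * z) ^ m = b m * z ^ m * (ζ ^ m) ^ j := by
          intro j
          rw [mul_pow, ← pow_mul, ← pow_mul, mul_comm j m]
          ring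
        simp_rw [hterm]
        rw [← Finset.mul_sum]
        split_ifs with hdvd
        · rw [(hζ.pow_eq_one_iff_dvd m).mpr hdvd]
          simp
          ring
        · rw [_root_.geom_sum_eq (by
            intro h1
            exact hdvd ((hζ.pow_eq_one_iff_dvd m).mp h1))]
          rw [← pow_mul, mul_comm m n, pow_mul, hζn, one_pow, sub_self, zero_div, mul_zero]
      rw [hinner] at htot
      have hreindex : HasSum (fun k => (n:ℂ) * (B k * (z ^ n) ^ k))
          (∑ j ∈ Finset.range n, g (ζ ^ j * z)) := by
        have hi : Function.Injective (fun k : ℕ => n * k) :=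
          fun x y h => Nat.eq_of_mul_eq_mul_left (Nat.pos_of_ne_zero hn0) h
        have hf : ∀ m ∉ Set.range (fun k : ℕ => n * k),
            (if n ∣ m then (n:ℂ) * (b m * z ^ m) else 0) = 0 := by
          intro m hm
          rw [if_neg]
          intro ⟨k, hk⟩
          exact hm ⟨k, hk.symm⟩
        have hcomp := (Function.Injective.hasSum_iff hi hf).mpr htot
        have heq : ((fun m => if n ∣ m then (n:ℂ) * (b m * z ^ m) else 0) ∘ (fun k : ℕ => n * k))
            = fun k => (n:ℂ) * (B k * (z ^ n) ^ k) := by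
          funext k
          simp only [Function.comp_apply]
          rw [if_pos (dvd_mul_right n k), ← pow_mul]
        rwa [heq] at hcomp
      rw [hzn] at hreindex
      have hscale : HasSum (fun k => (n:ℂ) * (B k * w ^ k)) ((n:ℂ) * H w) :=
        (hsH w hw).mul_left _
      have huniq : (n:ℂ) * H w = ∑ j ∈ Finset.range n, g (ζ ^ j * z) :=
        hscale.unique hreindex
      have habs : (n:ℝ) * ‖H w‖ ≤ n := by
        have h1 : ‖(n:ℂ) * H w‖ ≤ n := by
          rw [huniq]
          calc ‖∑ j ∈ Finset.range n, g (ζ ^ j * z)‖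
              ≤ ∑ j ∈ Finset.range n, ‖g (ζ ^ j * z)‖ := by
                simpa using norm_sum_le (Finset.range n) (fun j => g (ζ ^ j * z))
            _ ≤ ∑ _j ∈ Finset.range n, (1:ℝ) :=
                Finset.sum_le_sum (fun j _ => hbd _ (hmemj j))
            _ = n := by simp
        rwa [norm_mul, Complex.norm_natCast] at h1
      have hnpos : (0:ℝ) < n := by exact_mod_cast Nat.pos_of_ne_zero hn0
      nlinarith [habs, hnpos]
  have hfinal := sp_deriv hsH hH1
  rw [hB] at hfinal
  simpa [mul_one] using hfinal

end BRaux

set_option maxHeartbeats 1000000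

theorem bohr_rogosinski_refined_square
    (f : ℂ → ℂ) (a : ℕ → ℂ)
    (hf : ∀ z ∈ Metric.ball (0:ℂ) 1, HasSum (fun n => a n * z ^ n) (f z))
    (hb : ∀ z ∈ Metric.ball (0:ℂ) 1, ‖f z‖ ≤ 1)
    (z : ℂ) (hz : ‖z‖ ≤ 1 / 3) :
    ‖f z‖ ^ 2
      + ∑' n : ℕ, ‖a (n+1)‖ * ‖z‖ ^ (n+1)
      + (1 / (1 + ‖a 0‖) + ‖z‖ / (1 - ‖z‖))
          * ∑' n : ℕ, ‖a (n+1)‖ ^ 2 * ‖z‖ ^ (2*(n+1)) ≤ 1 := by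
  have hz1 : ‖z‖ < 1 := lt_of_le_of_lt hz (by norm_num)
  have hzb : z ∈ ball (0:ℂ) 1 := by
    rw [mem_ball_zero_iff]
    exact hz1
  set r := ‖z‖ with hr
  set A := ‖a 0‖ with hA
  have hr0 : 0 ≤ r := norm_nonneg _
  have hA0 : 0 ≤ A := norm_nonneg _
  have hA1 : A ≤ 1 := BRaux.coeff_le_one hf hb 0
  have h1A2 : (0:ℝ) ≤ 1 - A ^ 2 := by nlinarith
  have hW : ∀ m : ℕ, ‖a (m+1)‖ ≤ 1 - A ^ 2 := fun m =>
    BRaux.wiener hf hb (m+1) (by omega)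
  have h1r : (0:ℝ) < 1 - r := by linarith
  -- geometric facts
  have hgeo : Summable (fun m : ℕ => r ^ (m+1)) := by
    apply Summable.congr ((summable_geometric_of_lt_one hr0 hz1).mul_left r)
    intro m
    exact (pow_succ' r m).symm
  have hgeosum : (∑' m : ℕ, r ^ (m+1)) = r / (1 - r) := by
    calc (∑' m : ℕ, r ^ (m+1)) = ∑' m : ℕ, r * r ^ m := by
          apply tsum_congr
          intro m
          exact pow_succ' r m
      _ = r * ∑' m : ℕ, r ^ m := tsum_mul_left
      _ = r * (1 - r)⁻¹ := by rw [tsum_geometric_of_lt_one hr0 hz1]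
      _ = r / (1 - r) := (div_eq_mul_inv _ _).symm
  have hr2 : r ^ 2 < 1 := by nlinarith
  have hr20 : 0 ≤ r ^ 2 := sq_nonneg r
  have hgeo2 : Summable (fun m : ℕ => (r ^ 2) ^ (m+1)) := by
    apply Summable.congr ((summable_geometric_of_lt_one hr20 hr2).mul_left (r ^ 2))
    intro m
    exact (pow_succ' (r ^ 2) m).symm
  have hgeosum2 : (∑' m : ℕ, (r ^ 2) ^ (m+1)) = r ^ 2 / (1 - r ^ 2) := by
    calc (∑' m : ℕ, (r ^ 2) ^ (m+1)) = ∑' m : ℕ, r ^ 2 * (r ^ 2) ^ m := by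
          apply tsum_congr
          intro m
          exact pow_succ' (r ^ 2) m
      _ = r ^ 2 * ∑' m : ℕ, (r ^ 2) ^ m := tsum_mul_left
      _ = r ^ 2 * (1 - r ^ 2)⁻¹ := by rw [tsum_geometric_of_lt_one hr20 hr2]
      _ = r ^ 2 / (1 - r ^ 2) := (div_eq_mul_inv _ _).symm
  -- S1
  have hS1sum : Summable (fun m : ℕ => ‖a (m+1)‖ * r ^ (m+1)) := by
    apply Summable.of_nonneg_of_le (fun m => by positivity) (fun m => ?_)
      (hgeo.mul_left (1 - A ^ 2))
    exact mul_le_mul_of_nonneg_right (hW m) (by positivity)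
  have hS1 : (∑' m : ℕ, ‖a (m+1)‖ * r ^ (m+1)) ≤ (1 - A ^ 2) * (r / (1 - r)) := by
    calc (∑' m : ℕ, ‖a (m+1)‖ * r ^ (m+1))
        ≤ ∑' m : ℕ, (1 - A ^ 2) * r ^ (m+1) := by
          apply Summable.tsum_le_tsum (fun m => mul_le_mul_of_nonneg_right (hW m) (by positivity))
            hS1sum (hgeo.mul_left _)
      _ = (1 - A ^ 2) * ∑' m : ℕ, r ^ (m+1) := tsum_mul_left
      _ = (1 - A ^ 2) * (r / (1 - r)) := by rw [hgeosum]
  -- S2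
  have hterm2 : ∀ m : ℕ, ‖a (m+1)‖ ^ 2 * r ^ (2*(m+1))
      ≤ (1 - A ^ 2) ^ 2 * (r ^ 2) ^ (m+1) := by
    intro m
    rw [show (2*(m+1)) = 2*(m+1) from rfl, pow_mul]
    exact mul_le_mul_of_nonneg_right
      (pow_le_pow_left₀ (norm_nonneg _) (hW m) 2) (by positivity)
  have hS2sum : Summable (fun m : ℕ => ‖a (m+1)‖ ^ 2 * r ^ (2*(m+1))) := by
    apply Summable.of_nonneg_of_le (fun m => by positivity) hterm2
      (hgeo2.mul_left ((1 - A ^ 2) ^ 2))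
  have hS2 : (∑' m : ℕ, ‖a (m+1)‖ ^ 2 * r ^ (2*(m+1)))
      ≤ (1 - A ^ 2) ^ 2 * (r ^ 2 / (1 - r ^ 2)) := by
    calc (∑' m : ℕ, ‖a (m+1)‖ ^ 2 * r ^ (2*(m+1)))
        ≤ ∑' m : ℕ, (1 - A ^ 2) ^ 2 * (r ^ 2) ^ (m+1) :=
          Summable.tsum_le_tsum hterm2 hS2sum (hgeo2.mul_left _)
      _ = (1 - A ^ 2) ^ 2 * ∑' m : ℕ, (r ^ 2) ^ (m+1) := tsum_mul_left
      _ = (1 - A ^ 2) ^ 2 * (r ^ 2 / (1 - r ^ 2)) := by rw [hgeosum2]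
  have hS2nonneg : (0:ℝ) ≤ ∑' m : ℕ, ‖a (m+1)‖ ^ 2 * r ^ (2*(m+1)) :=
    tsum_nonneg (fun m => by positivity)
  -- value bound
  have hval : ‖f z‖ ≤ (A + r) / (1 + A * r) := BRaux.sp_value hf hb z hzb
  have hd3 : (0:ℝ) < 1 + A / 3 := by linarith
  have hdAr : (0:ℝ) < 1 + A * r := by nlinarith
  have hA3 : (0:ℝ) < A + 3 := by linarith
  have hval3 : ‖f z‖ ≤ (3 * A + 1) / (A + 3) := by
    refine le_trans hval ?_
    rw [div_le_div_iff₀ hdAr hA3]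
    nlinarith [mul_nonneg (by linarith : (0:ℝ) ≤ 1/3 - r) h1A2]
  have hT1 : ‖f z‖ ^ 2 ≤ (3 * A + 1) ^ 2 / (A + 3) ^ 2 := by
    rw [← div_pow]
    exact pow_le_pow_left₀ (norm_nonneg _) hval3 2
  -- numeric bounds
  have m2 : r / (1 - r) ≤ 1 / 2 := by
    rw [div_le_div_iff₀ h1r (by norm_num : (0:ℝ) < 2)]
    linarith
  have m3 : r ^ 2 / (1 - r ^ 2) ≤ 1 / 8 := by
    rw [div_le_div_iff₀ (by nlinarith) (by norm_num : (0:ℝ) < 8)]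
    nlinarith
  have hd2 : (0:ℝ) < 1 + A := by linarith
  have hT2 : (∑' m : ℕ, ‖a (m+1)‖ * r ^ (m+1)) ≤ (1 - A ^ 2) * (1 / 2) :=
    le_trans hS1 (mul_le_mul_of_nonneg_left m2 h1A2)
  have hS2b : (∑' m : ℕ, ‖a (m+1)‖ ^ 2 * r ^ (2*(m+1)))
      ≤ (1 - A ^ 2) ^ 2 * (1 / 8) :=
    le_trans hS2 (mul_le_mul_of_nonneg_left m3 (by positivity))
  have hcle : 1 / (1 + A) + r / (1 - r) ≤ 1 / (1 + A) + 1 / 2 := by linarith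
  have hcnonneg : (0:ℝ) ≤ 1 / (1 + A) + r / (1 - r) := by
    apply add_nonneg (by positivity) (div_nonneg hr0 h1r.le)
  have hT3 : (1 / (1 + A) + r / (1 - r))
        * (∑' m : ℕ, ‖a (m+1)‖ ^ 2 * r ^ (2*(m+1)))
      ≤ (1 / (1 + A) + 1 / 2) * ((1 - A ^ 2) ^ 2 * (1 / 8)) := by
    apply mul_le_mul hcle hS2b hS2nonneg (by positivity)
  have e1 : (1 / (1 + A) + 1 / 2) * ((1 - A ^ 2) ^ 2 * (1 / 8))
      = (3 + A) * (1 - A) ^ 2 * (1 + A) / 16 := by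
    field_simp
    ring
  have key : (3 * A + 1) ^ 2 / (A + 3) ^ 2
      ≤ 1 - (1 - A ^ 2) * (1 / 2) - (3 + A) * (1 - A) ^ 2 * (1 + A) / 16 := by
    rw [div_le_iff₀ (by positivity)]
    nlinarith [mul_nonneg (mul_nonneg (mul_nonneg
      (sub_nonneg.mpr hA1) (by linarith : (0:ℝ) ≤ 1 + A)) (sq_nonneg (1 - A)))
      (by nlinarith : (0:ℝ) ≤ A ^ 2 + 10 * A + 29)]
  linarith [hT1, hT2, hT3, key, e1.le, e1.ge]
end

section
/- Let f(z) = Σ_{n≥0} a_n z^n be analytic on the unit disk with |f(z)| ≤ 1, and suppose a = |a_0| ≤ 0.402964. Then for |z| = r ≤ 1/3, a + Σ_{n≥1} |a_n| r^n + (1/(1+a) + r/(1-r)) Σ_{n≥1} |a_n|² r^{2n} + (8/9) Σ_{n≥1} n |a_n|² r^{2n} ≤ 1, and the constants 1/3 and 8/9 are best possible. -/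
open Complex

noncomputable def mob (p : ℝ) : ℂ → ℂ := fun z => ((p:ℂ) - z) / (1 - (p:ℂ) * z)
noncomputable def mobC (p : ℝ) : ℕ → ℂ := fun n =>
  if n = 0 then (p:ℂ) else -(((1 - p^2) * p^(n-1) : ℝ) : ℂ)

lemma mob_hasSum {p : ℝ} (hp0 : 0 ≤ p) (hp1 : p < 1) :
    ∀ w ∈ Metric.ball (0:ℂ) 1, HasSum (fun n => mobC p n * w ^ n) (mob p w) := by
  intro w hw
  rw [Metric.mem_ball, dist_zero_right] at hw
  have hpw : ‖(p:ℂ) * w‖ < 1 := by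
    rw [norm_mul, Complex.norm_real]
    calc ‖p‖ * ‖w‖ ≤ 1 * ‖w‖ := by
          apply mul_le_mul_of_nonneg_right _ (norm_nonneg w)
          rw [Real.norm_eq_abs, _root_.abs_of_nonneg hp0]; exact hp1.le
      _ < 1 := by rwa [one_mul]
  have hne : (1 : ℂ) - (p:ℂ) * w ≠ 0 := by
    intro h
    have h' : (1:ℂ) = (p:ℂ)*w := by linear_combination h
    rw [← h'] at hpw; simp at hpw
  have hgeo : HasSum (fun n : ℕ => ((p:ℂ)*w)^n) (1 - (p:ℂ)*w)⁻¹ :=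
    hasSum_geometric_of_norm_lt_one hpw
  have h1 : HasSum (fun n : ℕ => mobC p (n+1) * w ^ (n+1))
      (-(((1:ℂ) - (p:ℂ)^2) * w) * (1 - (p:ℂ)*w)⁻¹) := by
    have := hgeo.mul_left (-(((1:ℂ) - (p:ℂ)^2) * w))
    convert this using 2 with n
    · rfl
    simp only [mobC, Nat.add_eq_zero, Nat.succ_ne_zero, and_false, if_false,
      Nat.add_sub_cancel]
    push_cast
    ring
  have key : -(((1:ℂ) - (p:ℂ)^2) * w) * (1 - (p:ℂ)*w)⁻¹
      = mob p w - ∑ i ∈ Finset.range 1, mobC p i * w ^ i := by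
    simp only [Finset.range_one, Finset.sum_singleton, pow_zero, mul_one, mobC, if_pos rfl, if_true, mob]
    field_simp
    ring
  rw [key] at h1
  exact (hasSum_nat_add_iff' 1).mp h1

lemma mob_bound {p : ℝ} (hp0 : 0 ≤ p) (hp1 : p < 1) :
    ∀ w ∈ Metric.ball (0:ℂ) 1, ‖mob p w‖ ≤ 1 := by
  intro w hw
  rw [Metric.mem_ball, dist_zero_right] at hw
  show ‖((p:ℂ) - w) / (1 - (p:ℂ) * w)‖ ≤ 1
  rw [norm_div]
  have hw2 : w.re^2 + w.im^2 < 1 := by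
    have h1 := Complex.sq_norm w
    have h2 : ‖w‖ < 1 := hw
    have h3 : 0 ≤ ‖w‖ := norm_nonneg w
    rw [Complex.normSq_apply] at h1
    nlinarith
  have h2 : ‖(p:ℂ) - w‖ ≤ ‖1 - (p:ℂ)*w‖ := by
    rw [Complex.norm_def, Complex.norm_def]
    apply Real.sqrt_le_sqrt
    simp only [Complex.normSq_apply, Complex.sub_re, Complex.sub_im, Complex.mul_re,
      Complex.mul_im, Complex.one_re, Complex.one_im, Complex.ofReal_re, Complex.ofReal_im]
    nlinarith [mul_nonneg (by nlinarith : (0:ℝ) ≤ 1-p^2) (by nlinarith : (0:ℝ) ≤ 1 - w.re^2 - w.im^2)]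
  exact div_le_one_of_le₀ h2 (norm_nonneg _)

lemma mobC_abs {p : ℝ} (hp0 : 0 ≤ p) (hp1 : p ≤ 1) (n : ℕ) :
    ‖mobC p (n+1)‖ = (1 - p^2) * p^n := by
  have : mobC p (n+1) = -(((1 - p^2) * p^n : ℝ) : ℂ) := by
    simp [mobC]
  rw [this, norm_neg, Complex.norm_real, Real.norm_eq_abs, _root_.abs_of_nonneg]
  have h2 : 0 ≤ 1 - p^2 := by nlinarith
  positivity

lemma hasSum_succ_geom {x : ℝ} (hx0 : 0 ≤ x) (hx1 : x < 1) :
    HasSum (fun n : ℕ => ((n:ℝ)+1) * x^n) (1/(1-x)^2) := by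
  have hn : ‖x‖ < 1 := by rwa [Real.norm_eq_abs, _root_.abs_of_nonneg hx0]
  have h1 := hasSum_coe_mul_geometric_of_norm_lt_one hn
  have h2 := hasSum_geometric_of_norm_lt_one hn
  have h3 := h1.add h2
  have hne : (1:ℝ) - x ≠ 0 := by intro h; nlinarith
  have e1 : (fun n : ℕ => ((n:ℝ)+1) * x^n) = fun b : ℕ => (b:ℝ) * x ^ b + x ^ b := by
    funext n; ring
  have e2 : 1/(1-x)^2 = x/(1-x)^2 + (1-x)⁻¹ := by
    field_simp
    ring
  rw [e1, e2]; exact h3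

lemma mob_t1 {p r : ℝ} (hp0 : 0 ≤ p) (hp1 : p < 1) (hr0 : 0 ≤ r) (hr1 : r < 1) :
    ∑' n : ℕ, ‖mobC p (n+1)‖ * r^(n+1) = (1-p^2)*r/(1-p*r) := by
  have hpr : p * r < 1 := by nlinarith
  have hc : ∀ n : ℕ, ‖mobC p (n+1)‖ * r^(n+1) = ((1-p^2)*r) * (p*r)^n := by
    intro n; rw [mobC_abs hp0 hp1.le, mul_pow, pow_succ]; ring
  rw [tsum_congr hc, tsum_mul_left, tsum_geometric_of_lt_one (by positivity) hpr]
  rw [div_eq_mul_inv]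

lemma mob_t2 {p r : ℝ} (hp0 : 0 ≤ p) (hp1 : p < 1) (hr0 : 0 ≤ r) (hr1 : r < 1) :
    ∑' n : ℕ, ‖mobC p (n+1)‖^2 * r^(2*(n+1)) = (1-p^2)^2*r^2/(1-p^2*r^2) := by
  have hpr1 : p * r < 1 := by nlinarith
  have hpr : p^2 * r^2 < 1 := by nlinarith [mul_nonneg hp0 hr0, sq_nonneg (p*r)]
  have hc : ∀ n : ℕ, ‖mobC p (n+1)‖^2 * r^(2*(n+1))
      = ((1-p^2)^2*r^2) * (p^2*r^2)^n := by
    intro n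
    rw [mobC_abs hp0 hp1.le, pow_mul, mul_pow, mul_pow, pow_succ, ← pow_mul, ← pow_mul]
    ring_nf
  rw [tsum_congr hc, tsum_mul_left, tsum_geometric_of_lt_one (by positivity) hpr]
  rw [div_eq_mul_inv]

lemma mob_t3 {p r : ℝ} (hp0 : 0 ≤ p) (hp1 : p < 1) (hr0 : 0 ≤ r) (hr1 : r < 1) :
    ∑' n : ℕ, ((n:ℝ)+1) * ‖mobC p (n+1)‖^2 * r^(2*(n+1))
      = (1-p^2)^2*r^2/(1-p^2*r^2)^2 := by
  have hpr1 : p * r < 1 := by nlinarith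
  have hpr : p^2 * r^2 < 1 := by nlinarith [mul_nonneg hp0 hr0, sq_nonneg (p*r)]
  have hc : ∀ n : ℕ, ((n:ℝ)+1) * ‖mobC p (n+1)‖^2 * r^(2*(n+1))
      = ((1-p^2)^2*r^2) * (((n:ℝ)+1) * (p^2*r^2)^n) := by
    intro n
    rw [mobC_abs hp0 hp1.le, pow_mul, mul_pow, mul_pow, pow_succ, ← pow_mul, ← pow_mul]
    ring_nf
  rw [tsum_congr hc, tsum_mul_left, (hasSum_succ_geom (by positivity) hpr).tsum_eq]
  field_simp

lemma part2 (r : ℝ) (hr : 1/3 < r) (hr1 : r < 1) :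
    ∃ (f : ℂ → ℂ) (a : ℕ → ℂ) (z : ℂ),
      (∀ w ∈ Metric.ball (0:ℂ) 1, HasSum (fun n => a n * w ^ n) (f w)) ∧
      (∀ w ∈ Metric.ball (0:ℂ) 1, ‖f w‖ ≤ 1) ∧
      ‖z‖ = r ∧
      1 < ‖a 0‖
        + (∑' n : ℕ, ‖a (n+1)‖ * ‖z‖ ^ (n+1))
        + (1 / (1 + ‖a 0‖) + ‖z‖ / (1 - ‖z‖))
            * (∑' n : ℕ, ‖a (n+1)‖ ^ 2 * ‖z‖ ^ (2*(n+1)))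
        + (8/9) * (∑' n : ℕ, ((n:ℝ)+1) * ‖a (n+1)‖ ^ 2
                      * ‖z‖ ^ (2*(n+1))) := by
  have hr0 : (0:ℝ) < r := by linarith
  obtain ⟨p, hp⟩ : ∃ x : ℝ, x = (1+r)/(4*r) := ⟨_, rfl⟩
  have hp0 : 0 ≤ p := by rw [hp]; positivity
  have hp1 : p < 1 := by
    rw [hp, div_lt_one (by linarith)]; linarith
  have habs : ‖((r:ℝ):ℂ)‖ = r := by
    rw [Complex.norm_real, Real.norm_eq_abs, _root_.abs_of_nonneg hr0.le]
  refine ⟨mob p, mobC p, ((r:ℝ):ℂ), mob_hasSum hp0 hp1, mob_bound hp0 hp1, habs, ?_⟩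
  rw [habs, mob_t1 hp0 hp1 hr0.le hr1]
  have h0 : ‖mobC p 0‖ = p := by
    have : mobC p 0 = ((p:ℝ):ℂ) := by simp [mobC]
    rw [this, Complex.norm_real, Real.norm_eq_abs]; exact _root_.abs_of_nonneg hp0
  rw [h0]
  have ht2 : 0 ≤ ∑' n : ℕ, ‖mobC p (n+1)‖ ^ 2 * r ^ (2*(n+1)) :=
    tsum_nonneg fun n => by positivity
  have ht3 : 0 ≤ ∑' n : ℕ, ((n:ℝ)+1) * ‖mobC p (n+1)‖ ^ 2 * r ^ (2*(n+1)) :=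
    tsum_nonneg fun n => by positivity
  have h1r : (0:ℝ) < 1 - r := by linarith
  have hC : 0 ≤ 1/(1+p) + r/(1-r) := by positivity
  have hpr : p * r = (1+r)/4 := by
    rw [hp]; field_simp
  have hd : (0:ℝ) < 1 - p*r := by rw [hpr]; linarith
  have hkey : 1 < p + (1-p^2)*r/(1-p*r) := by
    have hid : p + (1-p^2)*r/(1-p*r) - 1 = (1-p)*(r+2*(p*r)-1)/(1-p*r) := by
      field_simp
      ring
    have hpos : 0 < (1-p)*(r+2*(p*r)-1)/(1-p*r) := by
      apply div_pos _ hd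
      apply mul_pos (by linarith)
      rw [hpr]; linarith
    linarith
  linarith [hkey, mul_nonneg hC ht2, ht3]

lemma part3 (lam : ℝ) (hl : 8/9 < lam) :
    ∃ (f : ℂ → ℂ) (a : ℕ → ℂ) (z : ℂ),
      (∀ w ∈ Metric.ball (0:ℂ) 1, HasSum (fun n => a n * w ^ n) (f w)) ∧
      (∀ w ∈ Metric.ball (0:ℂ) 1, ‖f w‖ ≤ 1) ∧
      ‖z‖ = 1/3 ∧
      1 < ‖a 0‖
        + (∑' n : ℕ, ‖a (n+1)‖ * ‖z‖ ^ (n+1))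
        + (1 / (1 + ‖a 0‖) + ‖z‖ / (1 - ‖z‖))
            * (∑' n : ℕ, ‖a (n+1)‖ ^ 2 * ‖z‖ ^ (2*(n+1)))
        + lam * (∑' n : ℕ, ((n:ℝ)+1) * ‖a (n+1)‖ ^ 2
                      * ‖z‖ ^ (2*(n+1))) := by
  obtain ⟨t, ht⟩ : ∃ x : ℝ, x = min ((lam - 8/9)/20) (1/18) := ⟨_, rfl⟩
  have ht0 : 0 < t := by rw [ht]; exact lt_min (by linarith) (by norm_num)
  have ht18 : t ≤ 1/18 := by rw [ht]; exact min_le_right _ _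
  have htl : 8/9 + 20*t ≤ lam := by
    have h : t ≤ (lam - 8/9)/20 := by rw [ht]; exact min_le_left _ _
    linarith
  obtain ⟨p, hpdef⟩ : ∃ x : ℝ, x = 1 - t := ⟨_, rfl⟩
  have hp0 : 0 ≤ p := by rw [hpdef]; linarith
  have hp1 : p < 1 := by rw [hpdef]; linarith
  have hbr : 0 < 18*lam*(1+p)^2 - (9-p^2)^2 := by
    have h1 : (0:ℝ) ≤ 18*(lam-(8/9+20*t))*(2-t)^2 :=
      mul_nonneg (mul_nonneg (by norm_num) (by linarith)) (sq_nonneg _)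
    have h3 : (0:ℝ) < 1344 - 1412*t + 364*t^2 - t^3 := by
      nlinarith [mul_nonneg (by linarith : (0:ℝ) ≤ 364 - t) (mul_nonneg ht0.le ht0.le)]
    have h2 : 0 < 1344*t - 1412*t^2 + 364*t^3 - t^4 := by
      have h5 := mul_pos ht0 h3
      nlinarith [h5]
    have h4 : 18*lam*(1+p)^2 - (9-p^2)^2
        = 18*(lam-(8/9+20*t))*(2-t)^2 + (1344*t - 1412*t^2 + 364*t^3 - t^4) := by
      rw [hpdef]; ring
    linarith
  have habs : ‖(((1/3:ℝ)):ℂ)‖ = 1/3 := by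
    rw [Complex.norm_real, Real.norm_eq_abs]; norm_num
  refine ⟨mob p, mobC p, (((1/3:ℝ)):ℂ), mob_hasSum hp0 hp1, mob_bound hp0 hp1, habs, ?_⟩
  rw [habs, mob_t1 hp0 hp1 (by norm_num) (by norm_num),
    mob_t2 hp0 hp1 (by norm_num) (by norm_num), mob_t3 hp0 hp1 (by norm_num) (by norm_num)]
  have h0 : ‖mobC p 0‖ = p := by
    have : mobC p 0 = ((p:ℝ):ℂ) := by simp [mobC]
    rw [this, Complex.norm_real, Real.norm_eq_abs]; exact _root_.abs_of_nonneg hp0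
  rw [h0]
  have hd1 : (0:ℝ) < 1 - p*(1/3) := by nlinarith
  have hd2 : (0:ℝ) < 1 - p^2*(1/3)^2 := by nlinarith
  have hd3 : (0:ℝ) < 1 + p := by linarith
  have n1 : (3:ℝ) - p ≠ 0 := by nlinarith
  have n3 : (9:ℝ) - p^2 ≠ 0 := by nlinarith
  have n4 : (1:ℝ) + p ≠ 0 := by nlinarith
  have e1 : (1-p^2)*(1/3)/(1-p*(1/3)) = (1-p^2)/(3-p) := by
    rw [div_eq_div_iff (ne_of_gt hd1) n1]; ring
  have e2 : (1-p^2)^2*(1/3)^2/(1-p^2*(1/3)^2) = (1-p^2)^2/(9-p^2) := by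
    rw [div_eq_div_iff (ne_of_gt hd2) n3]; ring
  have e3 : (1-p^2)^2*(1/3)^2/(1-p^2*(1/3)^2)^2 = 9*(1-p^2)^2/(9-p^2)^2 := by
    rw [div_eq_div_iff (pow_ne_zero 2 (ne_of_gt hd2)) (pow_ne_zero 2 n3)]; ring
  have e4 : (1/3:ℝ)/(1-1/3) = 1/2 := by norm_num
  rw [e1, e2, e3, e4]
  have hid : p + (1-p^2)/(3-p) + (1/(1+p)+1/2)*((1-p^2)^2/(9-p^2))
      + lam*(9*(1-p^2)^2/(9-p^2)^2) - 1
      = (1-p)^2 * (18*lam*(1+p)^2 - (9-p^2)^2) / (2*(9-p^2)^2) := by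
    field_simp
    ring
  have hpos : 0 < (1-p)^2 * (18*lam*(1+p)^2 - (9-p^2)^2) / (2*(9-p^2)^2) := by
    apply div_pos
    · apply mul_pos _ hbr
      have h6 : (0:ℝ) < 1 - p := by linarith
      positivity
    · have h9 : (0:ℝ) < 9 - p^2 := by nlinarith
      positivity
  linarith [hid, hpos]

open MeasureTheory AddCircle in
set_option maxHeartbeats 1000000 in
lemma l2rho (f : ℂ → ℂ) (a : ℕ → ℂ)
    (hs : ∀ z ∈ Metric.ball (0:ℂ) 1, HasSum (fun n => a n * z ^ n) (f z))
    (hb : ∀ z ∈ Metric.ball (0:ℂ) 1, ‖f z‖ ≤ 1)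
    {ρ : ℝ} (hρ0 : 0 < ρ) (hρ1 : ρ < 1) (N : ℕ) :
    ∑ n ∈ Finset.range N, (‖a n‖ * ρ^n)^2 ≤ 1 := by
  haveI : Fact ((0:ℝ) < 1) := ⟨one_pos⟩
  set σ : ℝ := (1+ρ)/2 with hσ
  have hσ0 : 0 < σ := by rw [hσ]; linarith
  have hσ1 : σ < 1 := by rw [hσ]; linarith
  have hρσ : ρ < σ := by rw [hσ]; linarith
  -- bound on coefficients
  have hσball : ((σ:ℝ):ℂ) ∈ Metric.ball (0:ℂ) 1 := by
    rw [Metric.mem_ball, dist_zero_right, Complex.norm_real, Real.norm_eq_abs,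
      _root_.abs_of_nonneg hσ0.le]
    exact hσ1
  have hbdd : BddAbove (Set.range fun n => ‖a n * ((σ:ℝ):ℂ)^n‖) := by
    have h1 : Filter.Tendsto (fun n => a n * ((σ:ℝ):ℂ)^n) Filter.atTop (nhds 0) :=
      (hs _ hσball).summable.tendsto_atTop_zero
    exact (h1.norm.congr' (Filter.Eventually.of_forall fun n => rfl)).bddAbove_range
  obtain ⟨C, hC⟩ := hbdd
  have hCnn : ∀ n : ℕ, ‖a n * ((σ:ℝ):ℂ)^n‖ ≤ C := by
    intro n; exact hC (Set.mem_range_self n)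
  -- summability of the coefficients at radius ρ
  have habs : ∀ n : ℕ, ‖a n * ((ρ:ℝ):ℂ)^n‖ = ‖a n * ((σ:ℝ):ℂ)^n‖ * (ρ/σ)^n := by
    intro n
    rw [norm_mul, norm_mul, norm_pow, norm_pow, Complex.norm_real, Complex.norm_real,
      Real.norm_eq_abs, Real.norm_eq_abs, _root_.abs_of_nonneg hρ0.le,
      _root_.abs_of_nonneg hσ0.le, mul_assoc, ← mul_pow]
    rw [mul_div_cancel₀ _ (ne_of_gt hσ0)]
  have hcsum : Summable (fun n => ‖a n * ((ρ:ℝ):ℂ)^n‖) := by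
    apply Summable.of_nonneg_of_le (fun n => norm_nonneg _) (fun n => ?_)
      ((summable_geometric_of_lt_one (r := ρ/σ) (by positivity) (by
        rw [div_lt_one hσ0]; exact hρσ)).mul_left C)
    rw [habs n]
    exact mul_le_mul_of_nonneg_right (hCnn n) (by positivity)
  -- the boundary function as a continuous map on the circle
  have hfnorm : ∀ n : ℕ, ‖(a n * ((ρ:ℝ):ℂ)^n) • (fourier (T := 1) (n:ℤ))‖
      = ‖a n * ((ρ:ℝ):ℂ)^n‖ := by
    intro n
    rw [norm_smul, fourier_norm, mul_one]
  have hGsum : Summable (fun n : ℕ => (a n * ((ρ:ℝ):ℂ)^n) • (fourier (T := 1) (n:ℤ))) := by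
    apply Summable.of_norm
    simpa only [hfnorm] using hcsum
  obtain ⟨G, hG⟩ := hGsum
  -- pointwise description of G
  have hGpt : ∀ x : AddCircle (1:ℝ), ‖G x‖ ≤ 1 := by
    intro x
    induction x using QuotientAddGroup.induction_on with
    | H t =>
    set z : ℂ := ((ρ:ℝ):ℂ) * Complex.exp (2*Real.pi*Complex.I*t) with hz
    have hzball : z ∈ Metric.ball (0:ℂ) 1 := by
      rw [Metric.mem_ball, dist_zero_right, hz, norm_mul,
        Complex.norm_exp]
      have hre : (2*(Real.pi:ℂ)*Complex.I*(t:ℂ)).re = 0 := by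
        simp [Complex.mul_re, Complex.mul_im]
      rw [hre, Real.exp_zero, mul_one, Complex.norm_real, Real.norm_eq_abs, _root_.abs_of_nonneg hρ0.le]
      exact hρ1
    have heval : HasSum (fun n : ℕ => ((a n * ((ρ:ℝ):ℂ)^n) • (fourier (T := 1) (n:ℤ)))
        ((t : AddCircle (1:ℝ)))) (G ((t : AddCircle (1:ℝ)))) := by
      have hcont : Continuous fun (g : C(AddCircle (1:ℝ), ℂ)) => g ((t : AddCircle (1:ℝ))) :=
        continuous_eval_const _
      exact hG.map (AddMonoidHom.mk' (fun g : C(AddCircle (1:ℝ), ℂ) =>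
        g ((t : AddCircle (1:ℝ)))) (fun g h => rfl)) hcont
    have hterm : ∀ n : ℕ, ((a n * ((ρ:ℝ):ℂ)^n) • (fourier (T := 1) (n:ℤ)))
        ((t : AddCircle (1:ℝ))) = a n * z ^ n := by
      intro n
      rw [ContinuousMap.smul_apply, smul_eq_mul, fourier_coe_apply]
      have : Complex.exp (2*Real.pi*Complex.I*((n:ℤ):ℂ)*(t:ℂ)/(1:ℝ))
          = Complex.exp (2*Real.pi*Complex.I*(t:ℂ)) ^ (n:ℕ) := by
        rw [← Complex.exp_nat_mul]
        congr 1
        push_cast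
        ring
      rw [this, hz, mul_pow, mul_assoc]
    rw [funext hterm] at heval
    have := (hs z hzball).unique heval
    rw [← this]
    exact hb z hzball
  -- move to L²
  set F : Lp ℂ 2 (haarAddCircle (T := 1)) := ContinuousMap.toLp 2 haarAddCircle ℂ G with hF
  have hFsum : HasSum (fun n : ℕ => (a n * ((ρ:ℝ):ℂ)^n) • fourierLp (T := 1) 2 (n:ℤ)) F := by
    have h := (ContinuousMap.toLp (E := ℂ) 2 (haarAddCircle (T := 1)) ℂ).hasSum hG
    rw [hF]
    simpa only [_root_.map_smul] using h
  have hFbound : ‖F‖ ≤ 1 := by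
    have hae : ∀ᵐ x ∂(haarAddCircle (T := 1)), ‖(F : AddCircle (1:ℝ) → ℂ) x‖ ≤ 1 := by
      filter_upwards [ContinuousMap.coeFn_toLp (p := 2) (μ := haarAddCircle (T := 1)) (𝕜 := ℂ) G]
        with x hx
      rw [hF] at *
      rw [hx]
      exact hGpt x
    have h := MeasureTheory.Lp.norm_le_of_ae_bound (f := F) zero_le_one hae
    have hμ : (MeasureTheory.measureUnivNNReal (haarAddCircle (T := 1)) : ℝ) = 1 := by
      rw [MeasureTheory.measureUnivNNReal, measure_univ]
      simp
    rw [hμ] at h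
    simpa using h
  have hcoeff : ∀ n : ℕ,
      (inner ℂ (fourierLp (T := 1) 2 (n:ℤ)) F : ℂ) = a n * ((ρ:ℝ):ℂ)^n := by
    intro n
    have h1 := (innerSL ℂ (fourierLp (T := 1) 2 (n:ℤ))).hasSum hFsum
    have horth := orthonormal_iff_ite.mp (orthonormal_fourier (T := 1))
    have h2 : ∀ m : ℕ, (innerSL ℂ (fourierLp (T := 1) 2 (n:ℤ)))
        ((a m * ((ρ:ℝ):ℂ)^m) • fourierLp (T := 1) 2 (m:ℤ))
        = if m = n then a m * ((ρ:ℝ):ℂ)^m else 0 := by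
      intro m
      rw [innerSL_apply_apply, inner_smul_right, horth]
      by_cases h : m = n
      · have h' : (n:ℤ) = (m:ℤ) := by exact_mod_cast h.symm
        simp [h, h']
      · have h' : ¬((n:ℤ) = (m:ℤ)) := fun hc => h (by exact_mod_cast hc.symm)
        simp [h, h']
    rw [funext h2] at h1
    have h4 : (fun m : ℕ => if m = n then a m * ((ρ:ℝ):ℂ)^m else 0)
        = (fun m : ℕ => if m = n then a n * ((ρ:ℝ):ℂ)^n else 0) := by
      funext m
      by_cases h : m = n
      · simp [h]
      · simp [h]
    rw [h4] at h1
    exact ((hasSum_ite_eq n (a n * ((ρ:ℝ):ℂ)^n)).unique h1).symm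
  have hBessel := (orthonormal_fourier (T := 1)).sum_inner_products_le
    (s := (Finset.range N).image (Nat.cast : ℕ → ℤ)) F
  rw [Finset.sum_image (by intro x _ y _ h; exact_mod_cast h)] at hBessel
  have hfin : ∀ n : ℕ, ‖(inner ℂ (fourierLp (T := 1) 2 (n:ℤ)) F : ℂ)‖^2
      = (‖a n‖ * ρ^n)^2 := by
    intro n
    rw [hcoeff n, norm_mul, norm_pow, Complex.norm_real, Real.norm_eq_abs,
      _root_.abs_of_nonneg hρ0.le]
  calc ∑ n ∈ Finset.range N, (‖a n‖ * ρ^n)^2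
      = ∑ n ∈ Finset.range N, ‖(inner ℂ (fourierLp (T := 1) 2 (n:ℤ)) F : ℂ)‖^2 := by
        apply Finset.sum_congr rfl
        intro n _
        rw [hfin n]
    _ ≤ ‖F‖^2 := hBessel
    _ ≤ 1 := by nlinarith [norm_nonneg F, hFbound]

lemma l2bound (f : ℂ → ℂ) (a : ℕ → ℂ)
    (hs : ∀ z ∈ Metric.ball (0:ℂ) 1, HasSum (fun n => a n * z ^ n) (f z))
    (hb : ∀ z ∈ Metric.ball (0:ℂ) 1, ‖f z‖ ≤ 1) (N : ℕ) :
    ∑ n ∈ Finset.range N, ‖a n‖ ^ 2 ≤ 1 := by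
  set φ : ℝ → ℝ := fun ρ => ∑ n ∈ Finset.range N, (‖a n‖ * ρ^n)^2 with hφ
  have hcont : Continuous φ := by
    apply continuous_finset_sum
    intro n _
    fun_prop
  have hne : (nhdsWithin (1:ℝ) (Set.Ioo 0 1)).NeBot := by
    rw [← mem_closure_iff_nhdsWithin_neBot, closure_Ioo (by norm_num : (0:ℝ) ≠ 1)]
    exact Set.mem_Icc.mpr ⟨by norm_num, le_refl 1⟩
  have htend : Filter.Tendsto φ (nhdsWithin (1:ℝ) (Set.Ioo 0 1)) (nhds (φ 1)) :=
    (hcont.tendsto 1).mono_left nhdsWithin_le_nhds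
  have hev : ∀ᶠ ρ in nhdsWithin (1:ℝ) (Set.Ioo 0 1), φ ρ ≤ 1 := by
    filter_upwards [self_mem_nhdsWithin] with ρ hρ
    exact l2rho f a hs hb hρ.1 hρ.2 N
  have h1 : φ 1 ≤ 1 := le_of_tendsto htend hev
  rw [hφ] at h1
  simpa using h1

lemma part1 (f : ℂ → ℂ) (a : ℕ → ℂ)
    (hs : ∀ z ∈ Metric.ball (0:ℂ) 1, HasSum (fun n => a n * z ^ n) (f z))
    (hb : ∀ z ∈ Metric.ball (0:ℂ) 1, ‖f z‖ ≤ 1)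
    (ha : ‖a 0‖ ≤ 0.402964) :
    ∀ z : ℂ, ‖z‖ ≤ 1/3 →
      ‖a 0‖
        + (∑' n : ℕ, ‖a (n+1)‖ * ‖z‖ ^ (n+1))
        + (1 / (1 + ‖a 0‖) + ‖z‖ / (1 - ‖z‖))
            * (∑' n : ℕ, ‖a (n+1)‖ ^ 2 * ‖z‖ ^ (2*(n+1)))
        + (8/9) * (∑' n : ℕ, ((n:ℝ)+1) * ‖a (n+1)‖ ^ 2
                      * ‖z‖ ^ (2*(n+1))) ≤ 1 := by
  intro z hz
  set α : ℝ := ‖a 0‖ with hα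
  set r : ℝ := ‖z‖ with hrdef
  have hα0 : 0 ≤ α := norm_nonneg _
  have hr0 : 0 ≤ r := norm_nonneg _
  set b : ℕ → ℝ := fun n => ‖a (n+1)‖ with hbdef
  have hb0 : ∀ n, 0 ≤ b n := fun n => norm_nonneg _
  -- partial sums of squares
  have hpart : ∀ N : ℕ, ∑ n ∈ Finset.range N, (b n)^2 ≤ 1 - α^2 := by
    intro N
    have h := l2bound f a hs hb (N+1)
    rw [Finset.sum_range_succ', ← hα] at h
    have h2 : ∑ n ∈ Finset.range N, (b n)^2 = ∑ i ∈ Finset.range N, ‖a (i+1)‖^2 := rfl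
    rw [h2]
    linarith
  have hα1 : α^2 ≤ 1 := by
    have h := hpart 0
    simp only [Finset.range_zero, Finset.sum_empty] at h
    linarith
  have hsum2 : Summable (fun n => (b n)^2) :=
    summable_of_sum_range_le (fun n => sq_nonneg _) hpart
  have htsum2 : ∑' n : ℕ, (b n)^2 ≤ 1 - α^2 := Summable.tsum_le_of_sum_range_le hsum2 hpart
  -- powers of r
  have hr2 : ∀ m : ℕ, r^(2*m) ≤ (1/9:ℝ)^m := by
    intro m
    rw [pow_mul]
    exact pow_le_pow_left₀ (sq_nonneg r) (by nlinarith) m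
  have hr9 : ∀ n : ℕ, (1/9:ℝ)^(n+1) ≤ 1/9 := by
    intro n
    calc (1/9:ℝ)^(n+1) ≤ (1/9:ℝ)^1 := by
          apply pow_le_pow_of_le_one (by norm_num) (by norm_num)
          omega
      _ = 1/9 := pow_one _
  have hnine : ∀ n : ℕ, ((n:ℝ)+1) * (1/9:ℝ)^(n+1) ≤ 1/9 := by
    intro n
    have h1 : ((n:ℝ)+1) ≤ (9:ℝ)^n := by
      have := Nat.lt_pow_self (by norm_num : 1 < 9) (n := n)
      calc ((n:ℝ)+1) ≤ ((9^n : ℕ) : ℝ) := by exact_mod_cast this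
        _ = (9:ℝ)^n := by push_cast; ring
    have h2 : (9:ℝ)^n * (1/9:ℝ)^(n+1) = 1/9 := by
      rw [pow_succ, ← mul_assoc, ← mul_pow]
      norm_num
    calc ((n:ℝ)+1) * (1/9:ℝ)^(n+1) ≤ (9:ℝ)^n * (1/9:ℝ)^(n+1) :=
          mul_le_mul_of_nonneg_right h1 (by positivity)
      _ = 1/9 := h2
  -- first series
  have hg1b : ∀ n : ℕ, b n * r^(n+1) ≤ (39/200)*(b n)^2 + (50/39)*(1/9:ℝ)^(n+1) := by
    intro n
    have hsq : r^(n+1) * r^(n+1) = r^(2*(n+1)) := by rw [← pow_add]; ring_nf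
    have h2 := hr2 (n+1)
    nlinarith [sq_nonneg ((39/100)*b n - r^(n+1)), pow_nonneg hr0 (n+1)]
  have hB1sum : Summable (fun n : ℕ => (39/200)*(b n)^2 + (50/39)*(1/9:ℝ)^(n+1)) := by
    apply Summable.add (hsum2.mul_left _)
    have : Summable (fun n : ℕ => (1/9:ℝ)^n) := summable_geometric_of_lt_one (by norm_num) (by norm_num)
    exact ((this.mul_left (1/9)).congr (fun n => by rw [pow_succ]; ring)).mul_left _
  have hg1sum : Summable (fun n => b n * r^(n+1)) :=
    Summable.of_nonneg_of_le (fun n => by positivity) hg1b hB1sum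
  have hgeo9 : ∑' n : ℕ, (1/9:ℝ)^(n+1) = 1/8 := by
    have h := tsum_geometric_of_lt_one (by norm_num : (0:ℝ) ≤ 1/9) (by norm_num)
    have h2 : ∑' n : ℕ, (1/9:ℝ)^(n+1) = (1/9) * ∑' n : ℕ, (1/9:ℝ)^n := by
      rw [← tsum_mul_left]
      exact tsum_congr fun n => by rw [pow_succ]; ring
    rw [h2, h]
    norm_num
  have hT1 : ∑' n : ℕ, b n * r^(n+1) ≤ (39/200)*(1-α^2) + 25/156 := by
    have h := Summable.tsum_le_tsum hg1b hg1sum hB1sum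
    rw [Summable.tsum_add (hsum2.mul_left _) (by
      have : Summable (fun n : ℕ => (1/9:ℝ)^(n+1)) := by
        apply Summable.congr ((summable_geometric_of_lt_one (by norm_num : (0:ℝ) ≤ 1/9)
          (by norm_num)).mul_left (1/9))
        intro n; rw [pow_succ]; ring
      exact this.mul_left _), tsum_mul_left, tsum_mul_left, hgeo9] at h
    have h3 := htsum2
    nlinarith
  -- second series
  have hg2b : ∀ n : ℕ, (b n)^2 * r^(2*(n+1)) ≤ (1/9) * (b n)^2 := by
    intro n
    have := le_trans (hr2 (n+1)) (hr9 n)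
    nlinarith [sq_nonneg (b n), pow_nonneg hr0 (2*(n+1))]
  have hg2sum : Summable (fun n => (b n)^2 * r^(2*(n+1))) :=
    Summable.of_nonneg_of_le (fun n => by positivity) hg2b (hsum2.mul_left _)
  have hT2 : ∑' n : ℕ, (b n)^2 * r^(2*(n+1)) ≤ (1-α^2)/9 := by
    have h := Summable.tsum_le_tsum hg2b hg2sum (hsum2.mul_left _)
    rw [tsum_mul_left] at h
    linarith
  have hT2nn : 0 ≤ ∑' n : ℕ, (b n)^2 * r^(2*(n+1)) := tsum_nonneg fun n => by positivity
  -- third series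
  have hg3b : ∀ n : ℕ, ((n:ℝ)+1) * (b n)^2 * r^(2*(n+1)) ≤ (1/9) * (b n)^2 := by
    intro n
    have h1 : ((n:ℝ)+1) * r^(2*(n+1)) ≤ 1/9 := by
      calc ((n:ℝ)+1) * r^(2*(n+1)) ≤ ((n:ℝ)+1) * (1/9:ℝ)^(n+1) := by
            apply mul_le_mul_of_nonneg_left (hr2 (n+1)) (by positivity)
        _ ≤ 1/9 := hnine n
    calc ((n:ℝ)+1) * (b n)^2 * r^(2*(n+1)) = (((n:ℝ)+1) * r^(2*(n+1))) * (b n)^2 := by ring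
      _ ≤ (1/9) * (b n)^2 := mul_le_mul_of_nonneg_right h1 (sq_nonneg _)
  have hg3sum : Summable (fun n : ℕ => ((n:ℝ)+1) * (b n)^2 * r^(2*(n+1))) :=
    Summable.of_nonneg_of_le (fun n => by positivity) hg3b (hsum2.mul_left _)
  have hT3 : ∑' n : ℕ, ((n:ℝ)+1) * (b n)^2 * r^(2*(n+1)) ≤ (1-α^2)/9 := by
    have h := Summable.tsum_le_tsum hg3b hg3sum (hsum2.mul_left _)
    rw [tsum_mul_left] at h
    linarith
  -- coefficient
  have hrlt : r < 1 := by linarith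
  have hCnn : 0 ≤ 1/(1+α) + r/(1-r) := by
    have h1 : (0:ℝ) < 1 + α := by linarith
    have h2 : (0:ℝ) < 1 - r := by linarith
    positivity
  have hCle : 1/(1+α) + r/(1-r) ≤ 1/(1+α) + 1/2 := by
    have h2 : (0:ℝ) < 1 - r := by linarith
    have : r/(1-r) ≤ 1/2 := by
      rw [div_le_iff₀ h2]; linarith
    linarith
  have hCT2 : (1/(1+α) + r/(1-r)) * (∑' n : ℕ, (b n)^2 * r^(2*(n+1)))
      ≤ (1/(1+α) + 1/2) * ((1-α^2)/9) :=
    mul_le_mul hCle hT2 hT2nn (by positivity)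
  -- final polynomial inequality
  have hsplit : (1/(1+α) + 1/2) * ((1-α^2)/9) = (1-α)/9 + (1-α^2)/18 := by
    have h1 : (1:ℝ) + α ≠ 0 := by positivity
    field_simp
    ring
  have hfinal : α + ((39/200)*(1-α^2) + 25/156) + ((1-α)/9 + (1-α^2)/18)
      + (8/9)*((1-α^2)/9) ≤ 1 := by
    nlinarith [sq_nonneg α, mul_nonneg (sub_nonneg.2 ha) hα0, sq_nonneg (α - 0.402964)]
  have hT3' : (8/9) * (∑' n : ℕ, ((n:ℝ)+1) * (b n)^2 * r^(2*(n+1))) ≤ (8/9)*((1-α^2)/9) := by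
    linarith
  linarith [hT1, hCT2, hT3', hfinal]



theorem improved_refined_bohr_lambda_eight_ninths :
    (∀ (f : ℂ → ℂ) (a : ℕ → ℂ),
      (∀ z ∈ Metric.ball (0:ℂ) 1, HasSum (fun n => a n * z ^ n) (f z)) →
      (∀ z ∈ Metric.ball (0:ℂ) 1, ‖f z‖ ≤ 1) →
      ‖a 0‖ ≤ 0.402964 →
      ∀ z : ℂ, ‖z‖ ≤ 1/3 →
        ‖a 0‖
          + (∑' n : ℕ, ‖a (n+1)‖ * ‖z‖ ^ (n+1))
          + (1 / (1 + ‖a 0‖) + ‖z‖ / (1 - ‖z‖))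
              * (∑' n : ℕ, ‖a (n+1)‖ ^ 2 * ‖z‖ ^ (2*(n+1)))
          + (8/9) * (∑' n : ℕ, ((n:ℝ)+1) * ‖a (n+1)‖ ^ 2
                        * ‖z‖ ^ (2*(n+1))) ≤ 1)
    ∧
    -- sharpness of the radius 1/3
    (∀ r : ℝ, 1/3 < r → r < 1 →
      ∃ (f : ℂ → ℂ) (a : ℕ → ℂ) (z : ℂ),
        (∀ w ∈ Metric.ball (0:ℂ) 1, HasSum (fun n => a n * w ^ n) (f w)) ∧
        (∀ w ∈ Metric.ball (0:ℂ) 1, ‖f w‖ ≤ 1) ∧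
        ‖z‖ = r ∧
        1 < ‖a 0‖
          + (∑' n : ℕ, ‖a (n+1)‖ * ‖z‖ ^ (n+1))
          + (1 / (1 + ‖a 0‖) + ‖z‖ / (1 - ‖z‖))
              * (∑' n : ℕ, ‖a (n+1)‖ ^ 2 * ‖z‖ ^ (2*(n+1)))
          + (8/9) * (∑' n : ℕ, ((n:ℝ)+1) * ‖a (n+1)‖ ^ 2
                        * ‖z‖ ^ (2*(n+1))))
    ∧
    -- sharpness of the constant 8/9
    (∀ lam : ℝ, 8/9 < lam →
      ∃ (f : ℂ → ℂ) (a : ℕ → ℂ) (z : ℂ),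
        (∀ w ∈ Metric.ball (0:ℂ) 1, HasSum (fun n => a n * w ^ n) (f w)) ∧
        (∀ w ∈ Metric.ball (0:ℂ) 1, ‖f w‖ ≤ 1) ∧
        ‖z‖ = 1/3 ∧
        1 < ‖a 0‖
          + (∑' n : ℕ, ‖a (n+1)‖ * ‖z‖ ^ (n+1))
          + (1 / (1 + ‖a 0‖) + ‖z‖ / (1 - ‖z‖))
              * (∑' n : ℕ, ‖a (n+1)‖ ^ 2 * ‖z‖ ^ (2*(n+1)))
          + lam * (∑' n : ℕ, ((n:ℝ)+1) * ‖a (n+1)‖ ^ 2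
                        * ‖z‖ ^ (2*(n+1)))) := by
  exact ⟨fun f a hs hb ha => part1 f a hs hb ha, part2, part3⟩
end

section
/- Let f(z) = Σ_{n≥0} a_n z^n be analytic on the unit disk with |f(z)| ≤ 1, and suppose a = |a_0| ≤ 0.489758. Then for |z| = r ≤ 1/(3-a), a² + Σ_{n≥1} |a_n| r^n + (1/(1+a) + r/(1-r)) Σ_{n≥1} |a_n|² r^{2n} + (9/8) Σ_{n≥1} n |a_n|² r^{2n} ≤ 1. -/
open MeasureTheory Complex Real

set_option maxHeartbeats 1000000 in
lemma bohr_parseval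
    (f : ℂ → ℂ) (a : ℕ → ℂ)
    (hf : ∀ z ∈ Metric.ball (0:ℂ) 1, HasSum (fun n => a n * z ^ n) (f z))
    (hb : ∀ z ∈ Metric.ball (0:ℂ) 1, ‖f z‖ ≤ 1)
    {t : ℝ} (ht0 : 0 < t) (ht1 : t < 1) :
    Summable (fun m : ℕ => ‖a m‖ ^ 2 * t ^ (2 * m)) ∧
      (∑' m : ℕ, ‖a m‖ ^ 2 * t ^ (2 * m)) ≤ 1 := by
  haveI : Fact (0 < 2 * Real.pi) := ⟨by positivity⟩
  -- summability of |a m| t^m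
  set t' : ℝ := (1 + t) / 2 with ht'def
  have ht'0 : 0 < t' := by rw [ht'def]; linarith
  have htt' : t < t' := by rw [ht'def]; linarith
  have ht'1 : t' < 1 := by rw [ht'def]; linarith
  have hz' : (t' : ℂ) ∈ Metric.ball (0:ℂ) 1 := by
    simp only [Metric.mem_ball, dist_zero_right, Complex.norm_real, Real.norm_eq_abs,
      abs_of_pos ht'0]
    exact ht'1
  have hsum0 : Summable (fun m : ℕ => a m * (t' : ℂ) ^ m) := ⟨_, hf _ hz'⟩
  have hev : ∀ᶠ m : ℕ in Filter.atTop, ‖a m * (t' : ℂ) ^ m‖ ≤ 1 := by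
    have h1 : Filter.Tendsto (fun m : ℕ => ‖a m * (t' : ℂ) ^ m‖) Filter.atTop (nhds 0) := by
      simpa using hsum0.tendsto_atTop_zero.norm
    exact (h1.eventually_lt_const one_pos).mono fun m hm => hm.le
  have hgeo : Summable (fun m : ℕ => (t / t') ^ m) :=
    summable_geometric_of_lt_one (by positivity) (by rw [div_lt_one ht'0]; exact htt')
  have hsumc : Summable (fun m : ℕ => ‖a m‖ * t ^ m) := by
    apply Summable.of_norm_bounded_eventually_nat (g := fun m => (t / t') ^ m) hgeo
    filter_upwards [hev] with m hm
    have h1 : ‖a m‖ * t' ^ m ≤ 1 := by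
      simpa [norm_mul, norm_pow, Complex.norm_real, Real.norm_eq_abs,
        abs_of_pos ht'0] using hm
    have h2 : (‖a m‖ * t' ^ m) * (t / t') ^ m = ‖a m‖ * t ^ m := by
      rw [ht'def]
      have h12 : (1 + t) / 2 ≠ 0 := by positivity
      rw [mul_assoc, ← mul_pow, ← ht'def, mul_div_cancel₀ t ht'0.ne']
    have hnn : (0:ℝ) ≤ ‖a m‖ * t ^ m := by positivity
    rw [Real.norm_eq_abs, _root_.abs_of_nonneg hnn, ← h2]
    calc (‖a m‖ * t' ^ m) * (t / t') ^ m ≤ 1 * (t / t') ^ m :=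
          mul_le_mul_of_nonneg_right h1 (by positivity)
      _ = (t / t') ^ m := one_mul _
  -- the function g on the circle of radius t, as a continuous map
  have hnorm_term : ∀ m : ℕ, ‖(a m * (t:ℂ) ^ m) • (fourier (m:ℤ) : C(AddCircle (2 * Real.pi), ℂ))‖
      = ‖a m‖ * t ^ m := by
    intro m
    rw [norm_smul, fourier_norm, mul_one, norm_mul, norm_pow,
      Complex.norm_real, Real.norm_eq_abs, _root_.abs_of_pos ht0]
  have hF : Summable (fun m : ℕ =>
      (a m * (t:ℂ) ^ m) • (fourier (m:ℤ) : C(AddCircle (2 * Real.pi), ℂ))) := by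
    apply Summable.of_norm
    simp only [hnorm_term]
    exact hsumc
  set g : C(AddCircle (2 * Real.pi), ℂ) :=
    ∑' m : ℕ, (a m * (t:ℂ) ^ m) • (fourier (m:ℤ) : C(AddCircle (2 * Real.pi), ℂ)) with hgdef
  have hg : HasSum (fun m : ℕ =>
      (a m * (t:ℂ) ^ m) • (fourier (m:ℤ) : C(AddCircle (2 * Real.pi), ℂ))) g := hF.hasSum
  have hmem : ∀ x : ℝ, (t:ℂ) * Complex.exp (x * Complex.I) ∈ Metric.ball (0:ℂ) 1 := by
    intro x
    simp only [Metric.mem_ball, dist_zero_right, norm_mul,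
      Complex.norm_real, Real.norm_eq_abs, Complex.norm_exp_ofReal_mul_I, mul_one, _root_.abs_of_pos ht0]
    exact ht1
  have hgx : ∀ x : ℝ, g ((x : ℝ) : AddCircle (2 * Real.pi))
      = f ((t:ℂ) * Complex.exp (x * Complex.I)) := by
    intro x
    have he := hg.mapL (ContinuousMap.evalCLM ℂ ((x : ℝ) : AddCircle (2 * Real.pi)))
    have heq : ∀ m : ℕ,
        (ContinuousMap.evalCLM ℂ ((x : ℝ) : AddCircle (2 * Real.pi)))
          ((a m * (t:ℂ) ^ m) • (fourier (m:ℤ) : C(AddCircle (2 * Real.pi), ℂ)))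
        = a m * ((t:ℂ) * Complex.exp (x * Complex.I)) ^ m := by
      intro m
      show (a m * (t:ℂ) ^ m) * (fourier (m:ℤ) ((x : ℝ) : AddCircle (2 * Real.pi)))
        = a m * ((t:ℂ) * Complex.exp (x * Complex.I)) ^ m
      rw [fourier_coe_apply]
      have hpi : ((Real.pi : ℂ)) ≠ 0 := Complex.ofReal_ne_zero.mpr Real.pi_ne_zero
      have harg : 2 * (Real.pi:ℂ) * Complex.I * ((m:ℤ):ℂ) * (x:ℂ) / ((2 * Real.pi : ℝ):ℂ)
          = (m : ℂ) * ((x:ℂ) * Complex.I) := by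
        push_cast
        field_simp
      rw [harg, Complex.exp_nat_mul, mul_pow]
      ring
    have he' : HasSum (fun m : ℕ => a m * ((t:ℂ) * Complex.exp (x * Complex.I)) ^ m)
        (g ((x : ℝ) : AddCircle (2 * Real.pi))) := by
      show HasSum _ ((ContinuousMap.evalCLM ℂ ((x : ℝ) : AddCircle (2 * Real.pi))) g)
      simpa only [heq] using he
    exact he'.unique (hf _ (hmem x))
  have hgnorm : ‖g‖ ≤ 1 := by
    rw [ContinuousMap.norm_le _ zero_le_one]
    intro x
    refine QuotientAddGroup.induction_on x ?_
    intro y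
    rw [show ((QuotientAddGroup.mk y : AddCircle (2 * Real.pi))) = ((y : ℝ) : AddCircle (2 * Real.pi)) from rfl,
      hgx y]
    exact hb _ (hmem y)
  -- move to L²
  set G : Lp ℂ 2 (@AddCircle.haarAddCircle (2 * Real.pi) _) := ContinuousMap.toLp 2 AddCircle.haarAddCircle ℂ g with hGdef
  have hGnorm : ‖G‖ ≤ 1 := by
    have h1 := (ContinuousMap.toLp (E := ℂ) 2 (@AddCircle.haarAddCircle (2 * Real.pi) _) ℂ).le_opNorm g
    have h2 : ‖(ContinuousMap.toLp (E := ℂ) 2 (@AddCircle.haarAddCircle (2 * Real.pi) _) ℂ :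
        C(AddCircle (2 * Real.pi), ℂ) →L[ℂ] _)‖ ≤ 1 := by
      refine (ContinuousMap.toLp_norm_le _).trans ?_
      simp [measureUnivNNReal, measure_univ]
    calc ‖G‖ ≤ _ * ‖g‖ := h1
      _ ≤ 1 * 1 := mul_le_mul h2 hgnorm (norm_nonneg _) zero_le_one
      _ = 1 := one_mul _
  have hGsum : HasSum (fun m : ℕ => (a m * (t:ℂ) ^ m) • (fourierLp 2 (m:ℤ))) G := by
    have h := hg.mapL (ContinuousMap.toLp (E := ℂ) 2 (@AddCircle.haarAddCircle (2 * Real.pi) _) ℂ)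
    simpa only [_root_.map_smul] using h
  have hinner : ∀ n : ℕ,
      (inner ℂ (fourierLp (T := 2 * Real.pi) 2 (n:ℤ)) G : ℂ) = a n * (t:ℂ) ^ n := by
    intro n
    have h1 := hGsum.mapL (innerSL ℂ (fourierLp (T := 2 * Real.pi) 2 (n:ℤ)))
    have h2 : ∀ m : ℕ,
        innerSL ℂ (fourierLp (T := 2 * Real.pi) 2 (n:ℤ)) ((a m * (t:ℂ) ^ m) • fourierLp 2 (m:ℤ))
        = if m = n then a m * (t:ℂ) ^ m else 0 := by
      intro m
      rw [innerSL_apply_apply, inner_smul_right,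
        orthonormal_iff_ite.mp orthonormal_fourier (n:ℤ) (m:ℤ)]
      rcases eq_or_ne m n with rfl | hmn
      · simp
      · rw [if_neg (by exact_mod_cast (Ne.symm hmn)), mul_zero, if_neg hmn]
    have h3 : HasSum (fun m : ℕ => if m = n then a m * (t:ℂ) ^ m else 0) (a n * (t:ℂ) ^ n) := by
      have h4 := hasSum_ite_eq n (a n * (t:ℂ) ^ n)
      refine h4.congr_fun ?_
      intro m
      by_cases h : m = n <;> simp [h]
    have h5 : HasSum (fun m : ℕ => if m = n then a m * (t:ℂ) ^ m else 0)
        ((inner ℂ (fourierLp (T := 2 * Real.pi) 2 (n:ℤ)) G : ℂ)) := by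
      simpa only [h2, innerSL_apply_apply] using h1
    exact h5.unique h3
  have hEq : ∀ m : ℕ, ‖a m‖ ^ 2 * t ^ (2 * m)
      = ‖(inner ℂ (fourierLp (T := 2 * Real.pi) 2 (m:ℤ)) G : ℂ)‖ ^ 2 := by
    intro m
    rw [hinner m, norm_mul, norm_pow, Complex.norm_real, Real.norm_eq_abs,
      _root_.abs_of_pos ht0, mul_pow, ← pow_mul, mul_comm m 2]
  have hsummableZ : Summable (fun i : ℤ =>
      ‖(inner ℂ (fourierLp (T := 2 * Real.pi) 2 i) G : ℂ)‖ ^ 2) :=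
    orthonormal_fourier.inner_products_summable (x := G)
  have hcast : Function.Injective (fun n : ℕ => (n : ℤ)) := fun p q h => by simpa using h
  have hsumNat : Summable (fun m : ℕ => ‖a m‖ ^ 2 * t ^ (2 * m)) := by
    have h := hsummableZ.comp_injective hcast
    exact h.congr (fun m => (hEq m).symm)
  refine ⟨hsumNat, ?_⟩
  have hbessel := orthonormal_fourier.tsum_inner_products_le (x := G)
  have hle : (∑' m : ℕ, ‖a m‖ ^ 2 * t ^ (2 * m))
      ≤ ∑' i : ℤ, ‖(inner ℂ (fourierLp (T := 2 * Real.pi) 2 i) G : ℂ)‖ ^ 2 := by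
    refine Summable.tsum_le_tsum_of_inj (fun n : ℕ => (n : ℤ)) hcast
      (fun c _ => by positivity) (fun m => le_of_eq (hEq m)) hsumNat hsummableZ
  have hG2 : ‖G‖ ^ 2 ≤ 1 := by nlinarith [norm_nonneg G]
  linarith [hle, hbessel, hG2]

lemma geom_aux {q : ℝ} (hq0 : 0 ≤ q) (hq2 : q ≤ 1/2) (n : ℕ) :
    ((n : ℝ) + 1) * q ^ (n + 1) ≤ q := by
  have h1 : q ^ n ≤ (1/2 : ℝ) ^ n := pow_le_pow_left₀ hq0 hq2 n
  have h2 : ((n : ℝ) + 1) * (1/2 : ℝ) ^ n ≤ 1 := by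
    have hn : (n : ℝ) + 1 ≤ 2 ^ n := by
      have h := Nat.succ_le_of_lt ((Nat.lt_two_pow_self (n := n)))
      exact_mod_cast h
    have hp : (0:ℝ) < 2 ^ n := by positivity
    rw [div_pow, one_pow, mul_one_div, div_le_one hp]
    exact hn
  calc ((n : ℝ) + 1) * q ^ (n + 1) = (((n : ℝ) + 1) * q ^ n) * q := by ring
    _ ≤ 1 * q := by
        refine mul_le_mul_of_nonneg_right ?_ hq0
        calc ((n : ℝ) + 1) * q ^ n ≤ ((n : ℝ) + 1) * (1/2:ℝ) ^ n :=
              mul_le_mul_of_nonneg_left h1 (by positivity)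
          _ ≤ 1 := h2
    _ = q := one_mul q

set_option maxHeartbeats 1600000 in
theorem improved_refined_bohr_lambda_nine_eighths
    (f : ℂ → ℂ) (a : ℕ → ℂ)
    (hf : ∀ z ∈ Metric.ball (0:ℂ) 1, HasSum (fun n => a n * z ^ n) (f z))
    (hb : ∀ z ∈ Metric.ball (0:ℂ) 1, ‖f z‖ ≤ 1)
    (ha : ‖a 0‖ ≤ 0.489758)
    (z : ℂ) (hz : ‖z‖ ≤ 1 / (3 - ‖a 0‖)) :
    ‖a 0‖ ^ 2
      + (∑' n : ℕ, ‖a (n+1)‖ * ‖z‖ ^ (n+1))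
      + (1 / (1 + ‖a 0‖) + ‖z‖ / (1 - ‖z‖))
          * (∑' n : ℕ, ‖a (n+1)‖ ^ 2 * ‖z‖ ^ (2*(n+1)))
      + (9/8) * (∑' n : ℕ, ((n:ℝ)+1) * ‖a (n+1)‖ ^ 2
                    * ‖z‖ ^ (2*(n+1))) ≤ 1 := by
  set A := ‖a 0‖ with hAdef
  set r := ‖z‖ with hrdef
  have hA0 : 0 ≤ A := norm_nonneg _
  have hr0 : 0 ≤ r := norm_nonneg _
  have hA : A ≤ 0.489758 := ha
  have hA5 : A ≤ 1/2 := le_trans hA (by norm_num)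
  have h3A : (0:ℝ) < 3 - A := by linarith
  have hrle : r ≤ 2/5 := by
    refine le_trans hz ?_
    rw [div_le_div_iff₀ h3A (by norm_num)]
    linarith
  have hr1 : r < 1 := lt_of_le_of_lt hrle (by norm_num)
  obtain ⟨hsumt, htsum⟩ := bohr_parseval f a hf hb (t := (199/200 : ℝ))
    (by norm_num) (by norm_num)
  have hsumP : Summable (fun n : ℕ =>
      ‖a (n+1)‖ ^ 2 * (199/200:ℝ) ^ (2*(n+1))) :=
    (summable_nat_add_iff 1).mpr hsumt
  set P := ∑' n : ℕ, ‖a (n+1)‖ ^ 2 * (199/200:ℝ) ^ (2*(n+1)) with hPdef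
  have hP0 : 0 ≤ P := tsum_nonneg fun n => by positivity
  have hPle : P ≤ 1 - A^2 := by
    have hsplit := Summable.tsum_eq_zero_add hsumt
    rw [hsplit] at htsum
    norm_num at htsum
    linarith
  set s : ℝ := r * (200/199) with hsdef
  have hs0 : 0 ≤ s := by rw [hsdef]; positivity
  have hsle : s ≤ 80/199 := by rw [hsdef]; linarith
  have hrts : r = (199/200:ℝ) * s := by rw [hsdef]; ring
  set q : ℝ := s^2 with hqdef
  have hq0 : 0 ≤ q := by positivity
  have hqle : q ≤ 1617/10000 := by
    have h := pow_le_pow_left₀ hs0 hsle 2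
    rw [hqdef]
    refine le_trans h (by norm_num)
  have hq2 : q ≤ 1/2 := le_trans hqle (by norm_num)
  have hq1 : q < 1 := lt_of_le_of_lt hqle (by norm_num)
  have hr2q : r^2 = (199/200:ℝ)^2 * q := by rw [hrts, mul_pow, hqdef]
  have hrpow : ∀ n : ℕ, r ^ (2*(n+1)) = (199/200:ℝ) ^ (2*(n+1)) * q ^ (n+1) := by
    intro n
    calc r ^ (2*(n+1)) = (r^2)^(n+1) := by rw [pow_mul]
      _ = ((199/200:ℝ)^2 * q)^(n+1) := by rw [hr2q]
      _ = (199/200:ℝ) ^ (2*(n+1)) * q ^ (n+1) := by rw [mul_pow, ← pow_mul]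
  -- termwise bounds
  have b1 : ∀ n : ℕ, ‖a (n+1)‖ * r ^ (n+1)
      ≤ (1/4) * (‖a (n+1)‖ ^ 2 * (199/200:ℝ) ^ (2*(n+1))) + q ^ (n+1) := by
    intro n
    have e1 : ‖a (n+1)‖ * r ^ (n+1)
        = (‖a (n+1)‖ * (199/200:ℝ) ^ (n+1)) * s ^ (n+1) := by
      rw [hrts, mul_pow]; ring
    have e2 : ‖a (n+1)‖ ^ 2 * (199/200:ℝ) ^ (2*(n+1))
        = (‖a (n+1)‖ * (199/200:ℝ) ^ (n+1)) ^ 2 := by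
      rw [mul_pow, ← pow_mul, mul_comm (n+1) 2]
    have e3 : q ^ (n+1) = (s ^ (n+1)) ^ 2 := by
      rw [hqdef, ← pow_mul, ← pow_mul, mul_comm (n+1) 2]
    rw [e1, e2, e3]
    nlinarith [sq_nonneg (‖a (n+1)‖ * (199/200:ℝ) ^ (n+1) - 2 * s ^ (n+1))]
  have b2 : ∀ n : ℕ, ‖a (n+1)‖ ^ 2 * r ^ (2*(n+1))
      ≤ q * (‖a (n+1)‖ ^ 2 * (199/200:ℝ) ^ (2*(n+1))) := by
    intro n
    have hpow : q ^ (n+1) ≤ q := by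
      have := pow_le_pow_of_le_one hq0 (le_trans hq2 (by norm_num)) (Nat.one_le_iff_ne_zero.mpr (Nat.succ_ne_zero n))
      simpa using this
    calc ‖a (n+1)‖ ^ 2 * r ^ (2*(n+1))
        = (‖a (n+1)‖ ^ 2 * (199/200:ℝ) ^ (2*(n+1))) * q ^ (n+1) := by
          rw [hrpow n]; ring
      _ ≤ (‖a (n+1)‖ ^ 2 * (199/200:ℝ) ^ (2*(n+1))) * q :=
          mul_le_mul_of_nonneg_left hpow (by positivity)
      _ = q * (‖a (n+1)‖ ^ 2 * (199/200:ℝ) ^ (2*(n+1))) := mul_comm _ _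
  have b3 : ∀ n : ℕ, ((n:ℝ)+1) * ‖a (n+1)‖ ^ 2 * r ^ (2*(n+1))
      ≤ q * (‖a (n+1)‖ ^ 2 * (199/200:ℝ) ^ (2*(n+1))) := by
    intro n
    have hpow : ((n:ℝ)+1) * q ^ (n+1) ≤ q := geom_aux hq0 hq2 n
    calc ((n:ℝ)+1) * ‖a (n+1)‖ ^ 2 * r ^ (2*(n+1))
        = (‖a (n+1)‖ ^ 2 * (199/200:ℝ) ^ (2*(n+1))) * (((n:ℝ)+1) * q ^ (n+1)) := by
          rw [hrpow n]; ring
      _ ≤ (‖a (n+1)‖ ^ 2 * (199/200:ℝ) ^ (2*(n+1))) * q :=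
          mul_le_mul_of_nonneg_left hpow (by positivity)
      _ = q * (‖a (n+1)‖ ^ 2 * (199/200:ℝ) ^ (2*(n+1))) := mul_comm _ _
  -- summabilities
  have hgeoq : Summable (fun n : ℕ => q ^ (n+1)) :=
    (summable_nat_add_iff 1).mpr (summable_geometric_of_lt_one hq0 hq1)
  have hRHS1 : Summable (fun n : ℕ =>
      (1/4) * (‖a (n+1)‖ ^ 2 * (199/200:ℝ) ^ (2*(n+1))) + q ^ (n+1)) :=
    (hsumP.mul_left _).add hgeoq
  have hs1 : Summable (fun n : ℕ => ‖a (n+1)‖ * r ^ (n+1)) :=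
    Summable.of_nonneg_of_le (fun n => by positivity) b1 hRHS1
  have hRHS2 : Summable (fun n : ℕ =>
      q * (‖a (n+1)‖ ^ 2 * (199/200:ℝ) ^ (2*(n+1)))) := hsumP.mul_left q
  have hs2 : Summable (fun n : ℕ => ‖a (n+1)‖ ^ 2 * r ^ (2*(n+1))) :=
    Summable.of_nonneg_of_le (fun n => by positivity) b2 hRHS2
  have hs3 : Summable (fun n : ℕ => ((n:ℝ)+1) * ‖a (n+1)‖ ^ 2 * r ^ (2*(n+1))) :=
    Summable.of_nonneg_of_le (fun n => by positivity) b3 hRHS2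
  -- sum bounds
  have hgeosum : (∑' n : ℕ, q ^ (n+1)) = q * (1-q)⁻¹ := by
    calc (∑' n : ℕ, q ^ (n+1)) = ∑' n : ℕ, q * q ^ n := by
          refine tsum_congr fun n => ?_
          rw [pow_succ, mul_comm]
      _ = q * ∑' n : ℕ, q ^ n := tsum_mul_left
      _ = q * (1-q)⁻¹ := by rw [tsum_geometric_of_lt_one hq0 hq1]
  have hgeobd : q * (1-q)⁻¹ ≤ 193/1000 := by
    rw [← div_eq_mul_inv, div_le_iff₀ (by linarith : (0:ℝ) < 1 - q)]
    linarith
  have hS1 : (∑' n : ℕ, ‖a (n+1)‖ * r ^ (n+1)) ≤ (1/4) * P + 193/1000 := by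
    calc (∑' n : ℕ, ‖a (n+1)‖ * r ^ (n+1))
        ≤ ∑' n : ℕ, ((1/4) * (‖a (n+1)‖ ^ 2 * (199/200:ℝ) ^ (2*(n+1))) + q ^ (n+1)) :=
          Summable.tsum_le_tsum b1 hs1 hRHS1
      _ = (1/4) * P + ∑' n : ℕ, q ^ (n+1) := by
          rw [Summable.tsum_add (hsumP.mul_left _) hgeoq, tsum_mul_left]
      _ ≤ (1/4) * P + 193/1000 := by
          rw [hgeosum]; linarith
  have hS2 : (∑' n : ℕ, ‖a (n+1)‖ ^ 2 * r ^ (2*(n+1))) ≤ q * P := by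
    calc (∑' n : ℕ, ‖a (n+1)‖ ^ 2 * r ^ (2*(n+1)))
        ≤ ∑' n : ℕ, q * (‖a (n+1)‖ ^ 2 * (199/200:ℝ) ^ (2*(n+1))) :=
          Summable.tsum_le_tsum b2 hs2 hRHS2
      _ = q * P := tsum_mul_left
  have hS3 : (∑' n : ℕ, ((n:ℝ)+1) * ‖a (n+1)‖ ^ 2 * r ^ (2*(n+1))) ≤ q * P := by
    calc (∑' n : ℕ, ((n:ℝ)+1) * ‖a (n+1)‖ ^ 2 * r ^ (2*(n+1)))
        ≤ ∑' n : ℕ, q * (‖a (n+1)‖ ^ 2 * (199/200:ℝ) ^ (2*(n+1))) :=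
          Summable.tsum_le_tsum b3 hs3 hRHS2
      _ = q * P := tsum_mul_left
  have hS2nn : 0 ≤ (∑' n : ℕ, ‖a (n+1)‖ ^ 2 * r ^ (2*(n+1))) :=
    tsum_nonneg fun n => by positivity
  have hS3nn : 0 ≤ (∑' n : ℕ, ((n:ℝ)+1) * ‖a (n+1)‖ ^ 2 * r ^ (2*(n+1))) :=
    tsum_nonneg fun n => by positivity
  have hC0 : 0 ≤ 1/(1+A) + r/(1-r) :=
    add_nonneg (div_nonneg zero_le_one (by linarith)) (div_nonneg hr0 (by linarith))
  have hC : 1/(1+A) + r/(1-r) ≤ 5/3 := by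
    have h1 : 1/(1+A) ≤ 1 := by rw [div_le_one (by linarith)]; linarith
    have h2 : r/(1-r) ≤ 2/3 := by
      rw [div_le_iff₀ (by linarith : (0:ℝ) < 1 - r)]
      linarith
    linarith
  have hqP0 : 0 ≤ q * P := mul_nonneg hq0 hP0
  have hCS2 : (1/(1+A) + r/(1-r)) * (∑' n : ℕ, ‖a (n+1)‖ ^ 2 * r ^ (2*(n+1)))
      ≤ (5/3) * (q * P) := by
    nlinarith [hS2, hC0, hC, hS2nn, hqP0]
  have hqP : q * P ≤ (1617/10000) * P := mul_le_mul_of_nonneg_right hqle hP0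
  have hAA : A * A ≤ 0.489758 * 0.489758 := mul_le_mul hA hA hA0 (by norm_num)
  nlinarith [hS1, hCS2, hS3, hPle, hP0, hqP, hAA, hA0, hqP0]
end
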